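/- arXiv:0806.3944 — 5 statements merged into one kernel-verified Lean document; each statement's English description precedes it below -/
import Mathlib

section
/- For any natural number n ≥ 1, the number of primitive Dirichlet characters modulo n equals n · ∏_{p ∥ n} (1 - 2/p) · ∏_{p² ∣ n} (1 - 1/p)², where p ∥ n means p divides n exactly once. -/
open Filter Finset Real

/-- The number of primitive Dirichlet characters modulo `n`. -/
noncomputable def numPrim (n : ℕ) : ℕ :=
  Nat.card {χ : DirichletCharacter ℂ n // χ.IsPrimitive}

/-- The proportion of Dirichlet characters mod `n` that are primitive. -/
noncomputable def rho (n : ℕ) : ℝ := (numPrim n : ℝ) / (Nat.totient n : ℝ)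

/-- The product of the first `k` primes. -/
noncomputable def nthPrimorial (k : ℕ) : ℕ := ∏ i ∈ Finset.range k, Nat.nth Nat.Prime i

/-- The twin prime constant `C₂ = ∏_{p > 2} p(p-2)/(p-1)²`. -/
noncomputable def twinPrimeConst : ℝ :=
  ∏' p : {p : ℕ // p.Prime ∧ 2 < p},
    (((p : ℕ) : ℝ) * (((p : ℕ) : ℝ) - 2) / (((p : ℕ) : ℝ) - 1) ^ 2)

/-- Chebyshev's theta function `ϑ(x) = ∑_{p ≤ x} log p`. -/
noncomputable def theta (x : ℝ) : ℝ :=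
  ∑ p ∈ Nat.primesBelow (⌊x⌋₊ + 1), Real.log p

/-- The function `f` of Nicolas. -/
noncomputable def ffun (x : ℝ) : ℝ :=
  Real.exp Real.eulerMascheroniConstant * Real.log (theta x) *
    ∏ p ∈ Nat.primesBelow (⌊x⌋₊ + 1), (1 - 1 / (p : ℝ))

/-- The modified function `g`. -/
noncomputable def gfun (x : ℝ) : ℝ :=
  Real.exp Real.eulerMascheroniConstant * Real.log (theta x + Real.log 2) *
    (∏ p ∈ Nat.primesBelow (⌊x⌋₊ + 1), (1 - 1 / (p : ℝ))) *
    ∏' p : {p : ℕ // p.Prime ∧ x < (p : ℝ)},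
      (1 + 1 / (((p : ℕ) : ℝ) * (((p : ℕ) : ℝ) - 2)))

section Aux

lemma aux_exists (n d e : ℕ) [NeZero n] (hd : d ∣ n) (he : e ∣ n) (u : (ZMod n)ˣ)
    (hu : ZMod.unitsMap ((Nat.gcd_dvd_left d e).trans hd) u = 1) :
    ∃ w : (ZMod n)ˣ, ZMod.unitsMap hd w = 1 ∧ ZMod.unitsMap he w = ZMod.unitsMap he u := by
  have hd0 : d ≠ 0 := fun h => NeZero.ne n (Nat.eq_zero_of_zero_dvd (h ▸ hd))
  have he0 : e ≠ 0 := fun h => NeZero.ne n (Nat.eq_zero_of_zero_dvd (h ▸ he))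
  set g := Nat.gcd d e with hg
  have hg0 : 0 < g := Nat.gcd_pos_of_pos_left e (Nat.pos_of_ne_zero hd0)
  set m := Nat.lcm d e with hm
  have hmn : m ∣ n := Nat.lcm_dvd hd he
  set a : ℤ := ((u : ZMod n).val : ℤ) with ha
  have hua : (((a : ℤ)) : ZMod n) = (u : ZMod n) := by
    rw [ha, Int.cast_natCast]
    exact ZMod.natCast_rightInverse (u : ZMod n)
  have hcop : IsCoprime a (n : ℤ) := by
    rw [ha, Nat.isCoprime_iff_coprime]
    exact ZMod.val_coe_unit_coprime u
  -- from hu : u ≡ 1 mod g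
  have hga : (g : ℤ) ∣ a - 1 := by
    have h1 : (ZMod.castHom ((Nat.gcd_dvd_left d e).trans hd) (ZMod g)) (u : ZMod n) = 1 := by
      have := congrArg (Units.val) hu
      simpa [ZMod.unitsMap_def] using this
    rw [← hua, map_intCast] at h1
    have h2 : a ≡ 1 [ZMOD (g : ℤ)] := (ZMod.intCast_eq_intCast_iff a 1 g).mp (by exact_mod_cast h1)
    exact h2.symm.dvd
  obtain ⟨a1, ha1⟩ := hga
  have hdg : (d : ℤ) = (g : ℤ) * ((d / g : ℕ) : ℤ) := by
    exact_mod_cast (Nat.mul_div_cancel' (Nat.gcd_dvd_left d e)).symm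
  have heg : (e : ℤ) = (g : ℤ) * ((e / g : ℕ) : ℤ) := by
    exact_mod_cast (Nat.mul_div_cancel' (Nat.gcd_dvd_right d e)).symm
  have hcop2 : IsCoprime ((d / g : ℕ) : ℤ) ((e / g : ℕ) : ℤ) := by
    rw [Nat.isCoprime_iff_coprime]
    exact Nat.coprime_div_gcd_div_gcd hg0
  obtain ⟨x, y, hxy⟩ := hcop2
  set t : ℤ := x * a1 with ht
  set b : ℤ := 1 + d * t with hb
  have hbd : (d : ℤ) ∣ b - 1 := ⟨t, by ring⟩
  have hbe : (e : ℤ) ∣ b - a := by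
    refine ⟨-(a1 * y), ?_⟩
    have h3 : b - a = (d : ℤ) * t - (a - 1) := by ring
    rw [h3, ha1, hdg, heg, ht]
    linear_combination (g : ℤ) * a1 * hxy
  have hbdcop : IsCoprime b ((d : ℕ) : ℤ) := ⟨1, -t, by rw [hb]; ring⟩
  have haecop : IsCoprime a ((e : ℕ) : ℤ) :=
    hcop.of_isCoprime_of_dvd_right (by exact_mod_cast he)
  have hbecop : IsCoprime b ((e : ℕ) : ℤ) := by
    obtain ⟨s, hs⟩ := hbe
    have h4 : b = a + (e : ℤ) * s := by linarith
    rw [h4]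
    exact haecop.add_mul_left_left s
  have hbm : IsCoprime b ((m : ℕ) : ℤ) := by
    refine (hbdcop.mul_right hbecop).of_isCoprime_of_dvd_right ?_
    exact_mod_cast Nat.lcm_dvd_mul d e
  have hbu : IsUnit ((b : ZMod m)) := by
    have h5 := hbm.map (Int.castRingHom (ZMod m))
    have h0 : (((m : ℕ) : ℤ) : ZMod m) = 0 := by push_cast; exact ZMod.natCast_self m
    simp only [Int.coe_castRingHom, h0] at h5
    exact isCoprime_zero_right.mp h5
  obtain ⟨w, hw⟩ := ZMod.unitsMap_surjective hmn hbu.unit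
  have hdm : d ∣ m := Nat.dvd_lcm_left d e
  have hem : e ∣ m := Nat.dvd_lcm_right d e
  have key : ∀ (k : ℕ) (hk : k ∣ m), ZMod.unitsMap (hk.trans hmn) w = ZMod.unitsMap hk hbu.unit := by
    intro k hk
    rw [← ZMod.unitsMap_comp hk hmn, MonoidHom.comp_apply, hw]
  refine ⟨w, ?_, ?_⟩
  · have := key d hdm
    rw [show hd = hdm.trans hmn from rfl, this]
    ext
    rw [ZMod.unitsMap_def]
    show (ZMod.castHom hdm (ZMod d)) ((hbu.unit : (ZMod m)) ) = 1
    rw [IsUnit.unit_spec, map_intCast]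
    have : b ≡ 1 [ZMOD (d : ℤ)] := Int.ModEq.symm ((Int.modEq_iff_dvd).mpr (by simpa using hbd))
    calc ((b : ℤ) : ZMod d) = ((1 : ℤ) : ZMod d) := (ZMod.intCast_eq_intCast_iff _ _ _).mpr this
    _ = 1 := by norm_cast
  · have := key e hem
    rw [show he = hem.trans hmn from rfl, this]
    ext
    rw [ZMod.unitsMap_def, ZMod.unitsMap_def]
    show (ZMod.castHom hem (ZMod e)) ((hbu.unit : (ZMod m))) = (ZMod.castHom he (ZMod e)) ((u : ZMod n))
    rw [IsUnit.unit_spec, map_intCast, ← hua, map_intCast]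
    have : b ≡ a [ZMOD (e : ℤ)] := Int.ModEq.symm ((Int.modEq_iff_dvd).mpr (by simpa using hbe))
    exact (ZMod.intCast_eq_intCast_iff _ _ _).mpr this

open DirichletCharacter in
lemma conductor_dvd_of_factorsThrough {R : Type*} [CommMonoidWithZero R] {n : ℕ} [NeZero n]
    {χ : DirichletCharacter R n} {d : ℕ} (h : χ.FactorsThrough d) : χ.conductor ∣ d := by
  set c := χ.conductor with hcdef
  have hc : χ.FactorsThrough c := χ.factorsThrough_conductor
  have hcn : c ∣ n := hc.dvd
  have hdn : d ∣ n := h.dvd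
  have hkerc := (factorsThrough_iff_ker_unitsMap hcn).mp hc
  have hkerd := (factorsThrough_iff_ker_unitsMap hdn).mp h
  set g := Nat.gcd c d with hgdef
  have hgn : g ∣ n := (Nat.gcd_dvd_left c d).trans hcn
  have hfg : χ.FactorsThrough g := by
    rw [factorsThrough_iff_ker_unitsMap hgn]
    intro u hu
    have hu' : ZMod.unitsMap ((Nat.gcd_dvd_left c d).trans hcn) u = 1 := hu
    obtain ⟨w, hw1, hw2⟩ := aux_exists n c d hcn hdn u hu'
    have h1 : χ.toUnitHom w = 1 := hkerc hw1
    have h2 : χ.toUnitHom (u * w⁻¹) = 1 := by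
      refine hkerd ?_
      have : ZMod.unitsMap hdn (u * w⁻¹) = 1 := by
        rw [map_mul, map_inv, hw2, mul_inv_cancel]
      exact this
    have : χ.toUnitHom u = 1 := by
      calc χ.toUnitHom u = χ.toUnitHom ((u * w⁻¹) * w) := by rw [inv_mul_cancel_right]
      _ = χ.toUnitHom (u * w⁻¹) * χ.toUnitHom w := map_mul _ _ _
      _ = 1 := by rw [h1, h2, one_mul]
    exact this
  have hgc : g ∣ c := Nat.gcd_dvd_left c d
  have hcg : c ≤ g := Nat.sInf_le hfg
  have hcpos : 0 < c := Nat.pos_of_ne_zero χ.conductor_ne_zero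
  have hceq : c = g := le_antisymm hcg (Nat.le_of_dvd hcpos hgc)
  rw [hceq]
  exact Nat.gcd_dvd_right c d


open DirichletCharacter in
lemma conductor_changeLevel_of_isPrimitive {n d : ℕ} [NeZero n] (hd : d ∣ n)
    (χ₀ : DirichletCharacter ℂ d) (hχ₀ : χ₀.IsPrimitive) :
    (changeLevel hd χ₀).conductor = d := by
  have hd0 : d ≠ 0 := fun h => NeZero.ne n (Nat.eq_zero_of_zero_dvd (h ▸ hd))
  have h1 : (changeLevel hd χ₀).FactorsThrough d := changeLevel_factorsThrough χ₀ hd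
  have hcd : (changeLevel hd χ₀).conductor ∣ d := conductor_dvd_of_factorsThrough h1
  obtain ⟨hcn, ψ, hψ⟩ := (changeLevel hd χ₀).factorsThrough_conductor
  have h4 : changeLevel hd χ₀ = changeLevel hd (changeLevel hcd ψ) := by
    rw [← changeLevel_trans ψ hcd hd]
    exact hψ
  have h6 : χ₀.FactorsThrough (changeLevel hd χ₀).conductor :=
    ⟨hcd, ψ, changeLevel_injective hd h4⟩
  have h7' : χ₀.conductor ≤ (changeLevel hd χ₀).conductor :=
    Nat.sInf_le ((mem_conductorSet_iff _).mpr h6)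
  rw [hχ₀] at h7'
  exact le_antisymm (Nat.le_of_dvd (Nat.pos_of_ne_zero hd0) hcd) h7'

open DirichletCharacter in
lemma fiber_card {n d : ℕ} [NeZero n] (hd : d ∣ n) :
    Nat.card {χ : DirichletCharacter ℂ n // χ.conductor = d} = numPrim d := by
  have hd0 : d ≠ 0 := fun h => NeZero.ne n (Nat.eq_zero_of_zero_dvd (h ▸ hd))
  refine (Nat.card_congr (Equiv.ofBijective (fun χ₀ =>
      ⟨changeLevel hd χ₀.1, conductor_changeLevel_of_isPrimitive hd χ₀.1 χ₀.2⟩) ⟨?_, ?_⟩)).symm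
  · intro χ₀ χ₁ h
    have := congrArg Subtype.val h
    exact Subtype.ext (changeLevel_injective hd this)
  · rintro ⟨χ, hχ⟩
    have hft : χ.FactorsThrough d := by rw [← hχ]; exact χ.factorsThrough_conductor
    obtain ⟨hdd, χ₀, hχ₀⟩ := hft
    have hprim : χ₀.IsPrimitive := by
      have hcd : χ₀.conductor ∣ d := conductor_dvd_level χ₀
      obtain ⟨hcd', ψ₀, hψ₀⟩ := χ₀.factorsThrough_conductor
      have heq : χ = changeLevel (hcd'.trans hdd) ψ₀ := by
        rw [changeLevel_trans ψ₀ hcd' hdd, ← hψ₀, ← hχ₀]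
      have hft2 : χ.FactorsThrough χ₀.conductor := ⟨hcd'.trans hdd, ψ₀, heq⟩
      have h8' : χ.conductor ≤ χ₀.conductor := Nat.sInf_le ((mem_conductorSet_iff _).mpr hft2)
      rw [hχ] at h8'
      have h8 : d ≤ χ₀.conductor := h8'
      exact le_antisymm (Nat.le_of_dvd (Nat.pos_of_ne_zero hd0) hcd) h8
    exact ⟨⟨χ₀, hprim⟩, Subtype.ext hχ₀.symm⟩
open DirichletCharacter in
lemma totient_eq_sum_numPrim (n : ℕ) [NeZero n] :
    n.totient = ∑ d ∈ n.divisors, numPrim d := by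
  classical
  have hexp : NeZero (Monoid.exponent (ZMod n)ˣ) := ⟨Monoid.exponent_ne_zero_of_finite⟩
  rw [← DirichletCharacter.card_eq_totient_of_hasEnoughRootsOfUnity ℂ n,
    Nat.card_eq_fintype_card]
  have hmem : ∀ χ : DirichletCharacter ℂ n, χ ∈ (Finset.univ : Finset (DirichletCharacter ℂ n)) →
      χ.conductor ∈ n.divisors := fun χ _ =>
    Nat.mem_divisors.mpr ⟨conductor_dvd_level χ, NeZero.ne n⟩
  rw [← Finset.card_univ, Finset.card_eq_sum_card_fiberwise hmem]
  refine Finset.sum_congr rfl fun d hd => ?_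
  rw [← fiber_card (Nat.mem_divisors.mp hd).1, Nat.card_eq_fintype_card, Fintype.card_subtype]

open ArithmeticFunction in
/-- The totient as a real-valued arithmetic function. -/
noncomputable def totientR : ArithmeticFunction ℝ :=
  ⟨fun x => (x.totient : ℝ), by simp⟩

lemma totientR_apply (x : ℕ) : totientR x = (x.totient : ℝ) := rfl

open ArithmeticFunction in
lemma totientR_isMultiplicative : totientR.IsMultiplicative := by
  refine ⟨by simp [totientR_apply], fun h => ?_⟩
  simp only [totientR_apply, Nat.totient_mul h]
  push_cast
  ring

open ArithmeticFunction ArithmeticFunction.Moebius in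
lemma Fpp (p k : ℕ) (hp : p.Prime) (hk : 1 ≤ k) :
    ((↑(ArithmeticFunction.moebius) * totientR : ArithmeticFunction ℝ)) (p ^ k)
      = (p : ℝ) ^ k * (if k = 1 then 1 - 2 / (p : ℝ) else (1 - 1 / (p : ℝ)) ^ 2) := by
  have hp0 : (p : ℝ) ≠ 0 := Nat.cast_ne_zero.mpr hp.pos.ne'
  have key : ((↑(ArithmeticFunction.moebius) * totientR : ArithmeticFunction ℝ)) (p ^ k)
      = ∑ x ∈ Finset.range (k + 1), ((μ (p ^ x) : ℤ) : ℝ) * ((p ^ (k - x)).totient : ℝ) := by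
    rw [ArithmeticFunction.mul_apply,
      Nat.sum_divisorsAntidiagonal (fun i j => ((↑(μ) : ArithmeticFunction ℝ) i) * totientR j),
      Nat.sum_divisors_prime_pow hp]
    refine Finset.sum_congr rfl fun x hx => ?_
    rw [Finset.mem_range] at hx
    rw [Nat.pow_div (Nat.lt_succ_iff.mp hx) hp.pos, intCoe_apply, totientR_apply]
  rw [key]
  have hsplit : Finset.range (k + 1) = Finset.Ico 0 2 ∪ Finset.Ico 2 (k + 1) := by
    rw [Finset.range_eq_Ico, Finset.Ico_union_Ico_eq_Ico (Nat.zero_le 2) (by omega)]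
  rw [hsplit, Finset.sum_union (by
    simp [Finset.disjoint_left, Finset.mem_Ico]
    omega)]
  have h2 : ∑ x ∈ Finset.Ico 2 (k + 1), ((μ (p ^ x) : ℤ) : ℝ) * ((p ^ (k - x)).totient : ℝ) = 0 := by
    refine Finset.sum_eq_zero fun x hx => ?_
    rw [Finset.mem_Ico] at hx
    rw [moebius_apply_prime_pow hp (by omega), if_neg (by omega)]
    simp
  rw [h2, add_zero]
  have h01 : ∑ x ∈ Finset.Ico 0 2, ((μ (p ^ x) : ℤ) : ℝ) * ((p ^ (k - x)).totient : ℝ)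
      = ((p ^ k).totient : ℝ) - ((p ^ (k - 1)).totient : ℝ) := by
    rw [show (2 : ℕ) = 0 + 2 from rfl, Finset.sum_Ico_eq_sum_range]
    simp [Finset.sum_range_succ, moebius_apply_prime hp, ArithmeticFunction.moebius_apply_one]
    ring
  rw [h01]
  rcases eq_or_lt_of_le hk with h1 | h2k
  · subst h1
    rw [if_pos rfl, pow_one, Nat.sub_self, pow_zero, Nat.totient_one, Nat.totient_prime hp,
      Nat.cast_sub hp.one_lt.le]
    push_cast
    field_simp
    ring
  · obtain ⟨j, rfl⟩ : ∃ j, k = j + 2 := ⟨k - 2, by omega⟩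
    rw [if_neg (by omega)]
    rw [show j + 2 - 1 = j + 1 from rfl, Nat.totient_prime_pow hp (by omega),
      Nat.totient_prime_pow hp (by omega), show j + 2 - 1 = j + 1 from rfl,
      show j + 1 - 1 = j from rfl]
    push_cast [Nat.cast_sub hp.one_lt.le]
    field_simp
    ring

open ArithmeticFunction ArithmeticFunction.Moebius in
theorem numPrim_formula_aux (n : ℕ) (hn : 1 ≤ n) :
    (numPrim n : ℝ) =
      (n : ℝ) * (∏ p ∈ n.primeFactors.filter (fun p => ¬ p ^ 2 ∣ n), (1 - 2 / (p : ℝ))) *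
        ∏ p ∈ n.primeFactors.filter (fun p => p ^ 2 ∣ n), (1 - 1 / (p : ℝ)) ^ 2 := by
  classical
  have hn0 : n ≠ 0 := by omega
  have : NeZero n := ⟨hn0⟩
  have key : ∀ k > 0, ∑ i ∈ k.divisors, ((numPrim i : ℝ)) = (k.totient : ℝ) := by
    intro k hk
    have : NeZero k := ⟨hk.ne'⟩
    rw [totient_eq_sum_numPrim k, Nat.cast_sum]
  have h1 : (numPrim n : ℝ) =
      ∑ x ∈ n.divisorsAntidiagonal, ((μ x.1 : ℤ) : ℝ) * ((x.2).totient : ℝ) :=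
    (ArithmeticFunction.sum_eq_iff_sum_mul_moebius_eq.mp key n (by omega)).symm
  have h2 : (numPrim n : ℝ) =
      ((↑(ArithmeticFunction.moebius) * totientR : ArithmeticFunction ℝ)) n := by
    rw [h1, ArithmeticFunction.mul_apply]
    exact Finset.sum_congr rfl fun x _ => by rw [intCoe_apply, totientR_apply]
  have hF : ((↑(ArithmeticFunction.moebius) : ArithmeticFunction ℝ) * totientR).IsMultiplicative :=
    isMultiplicative_moebius.intCast.mul totientR_isMultiplicative
  rw [h2, hF.multiplicative_factorization _ hn0]
  rw [Finsupp.prod, Nat.support_factorization]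
  have hprod : ∀ p ∈ n.primeFactors,
      ((↑(ArithmeticFunction.moebius) * totientR : ArithmeticFunction ℝ)) (p ^ n.factorization p)
        = (p : ℝ) ^ n.factorization p *
          (if p ^ 2 ∣ n then (1 - 1 / (p : ℝ)) ^ 2 else 1 - 2 / (p : ℝ)) := by
    intro p hp
    have hpp : p.Prime := Nat.prime_of_mem_primeFactors hp
    have hv1 : 1 ≤ n.factorization p :=
      (hpp.dvd_iff_one_le_factorization hn0).mp (Nat.dvd_of_mem_primeFactors hp)
    rw [Fpp p _ hpp hv1]
    congr 1
    have hd2 : p ^ 2 ∣ n ↔ 2 ≤ n.factorization p := hpp.pow_dvd_iff_le_factorization hn0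
    by_cases h : n.factorization p = 1
    · rw [if_pos h, if_neg (by omega)]
    · rw [if_neg h, if_pos (hd2.mpr (by omega))]
  rw [Finset.prod_congr rfl hprod, Finset.prod_mul_distrib, Finset.prod_ite]
  have hnat := Nat.factorization_prod_pow_eq_self hn0
  rw [Finsupp.prod, Nat.support_factorization] at hnat
  have hn' : ∏ p ∈ n.primeFactors, (p : ℝ) ^ n.factorization p = (n : ℝ) := by
    conv_rhs => rw [← hnat]
    push_cast
    rfl
  rw [hn']
  ring

end Aux

theorem numPrim_formula (n : ℕ) (hn : 1 ≤ n) :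
    (numPrim n : ℝ) =
      (n : ℝ) * (∏ p ∈ n.primeFactors.filter (fun p => ¬ p ^ 2 ∣ n), (1 - 2 / (p : ℝ))) *
        ∏ p ∈ n.primeFactors.filter (fun p => p ^ 2 ∣ n), (1 - 1 / (p : ℝ)) ^ 2 := by
  exact numPrim_formula_aux n hn
end

section
/- Define f(x) = e^γ · log ϑ(x) · ∏_{p ≤ x}(1 - 1/p) and g(x) = e^γ · log(ϑ(x) + log 2) · ∏_{p ≤ x}(1 - 1/p) · ∏_{p > x}(1 + 1/(p(p-2))) for x ≥ 2, where ϑ(x) = ∑_{p ≤ x} log p is the Chebyshev theta function. Then for all x > 2 with ϑ(x) > 1, 0 < log(g(x)/f(x)) ≤ (log 2)/(ϑ(x)·log ϑ(x)) + 1/(x - 2). -/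
open Filter Finset Real

private noncomputable def hfun (n : ℕ) : ℝ := 1 / ((n : ℝ) - 2)

private lemma hfun_sub (a : ℕ) (ha : 3 ≤ a) :
    hfun a - hfun (a + 1) = 1 / (((a:ℝ) - 1) * ((a:ℝ) - 2)) := by
  have h3' : (3:ℝ) ≤ (a:ℝ) := by exact_mod_cast ha
  have h1 : (a:ℝ) - 1 ≠ 0 := by linarith
  have h2 : (a:ℝ) - 2 ≠ 0 := by linarith
  unfold hfun
  push_cast
  rw [div_sub_div _ _ h2 (by linarith : (a:ℝ) + 1 - 2 ≠ 0)]
  rw [show (a:ℝ) + 1 - 2 = (a:ℝ) - 1 by ring]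
  rw [show (1:ℝ) * ((a:ℝ) - 1) - ((a:ℝ) - 2) * 1 = 1 by ring]
  rw [mul_comm]

private lemma key_sum (x : ℝ) (hx : 2 < x) (s : Finset {p : ℕ // p.Prime ∧ x < (p : ℝ)}) :
    ∑ p ∈ s, (1 / (((p : ℕ) : ℝ) * (((p : ℕ) : ℝ) - 2))) ≤ 1 / (x - 2) := by
  have hx2 : (0:ℝ) < x - 2 := by linarith
  set m : ℕ := ⌊x⌋₊ + 1 with hm
  have hx0 : (0:ℝ) ≤ x := by linarith
  have hm3 : 3 ≤ m := by
    have : 2 ≤ ⌊x⌋₊ := Nat.le_floor (by exact_mod_cast hx.le)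
    omega
  have hmx : x - 2 ≤ (m:ℝ) - 2 := by
    have := Nat.lt_floor_add_one x
    push_cast [hm]
    push_cast at this
    linarith
  have hps : ∀ p ∈ s, m ≤ (p:ℕ) := by
    intro p _
    have : ⌊x⌋₊ < (p:ℕ) := (Nat.floor_lt hx0).2 p.2.2
    omega
  have step1 : ∑ p ∈ s, (1 / (((p : ℕ) : ℝ) * (((p : ℕ) : ℝ) - 2)))
      ≤ ∑ p ∈ s, (hfun (p:ℕ) - hfun ((p:ℕ) + 1)) := by
    apply Finset.sum_le_sum
    intro p hp
    have h3 : 3 ≤ (p:ℕ) := le_trans hm3 (hps p hp)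
    have h3' : (3:ℝ) ≤ ((p:ℕ):ℝ) := by exact_mod_cast h3
    rw [hfun_sub _ h3]
    apply one_div_le_one_div_of_le
    · nlinarith
    · nlinarith
  set t : Finset ℕ := s.image Subtype.val with ht
  have step2 : ∑ p ∈ s, (hfun (p:ℕ) - hfun ((p:ℕ) + 1))
      = ∑ n ∈ t, (hfun n - hfun (n + 1)) := by
    rw [ht, Finset.sum_image]
    intro a _ b _ hab
    exact Subtype.ext hab
  have hts : ∀ n ∈ t, m ≤ n := by
    intro n hn
    rw [ht, Finset.mem_image] at hn
    obtain ⟨p, hp, rfl⟩ := hn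
    exact hps p hp
  have hnn : ∀ n : ℕ, 3 ≤ n → 0 ≤ hfun n - hfun (n + 1) := by
    intro n hn
    have h3' : (3:ℝ) ≤ (n:ℝ) := by exact_mod_cast hn
    rw [hfun_sub _ hn]
    apply one_div_nonneg.mpr
    nlinarith
  have hfm : hfun m ≤ 1 / (x - 2) := one_div_le_one_div_of_le hx2 hmx
  have hbase : ∑ p ∈ s, (1 / (((p : ℕ) : ℝ) * (((p : ℕ) : ℝ) - 2)))
      ≤ ∑ n ∈ t, (hfun n - hfun (n + 1)) := step1.trans_eq step2
  rcases t.eq_empty_or_nonempty with h | h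
  · rw [h, Finset.sum_empty] at hbase
    exact hbase.trans (by positivity)
  · set N := t.max' h with hN
    have hsub : t ⊆ Finset.Ico m (N+1) := by
      intro n hn
      rw [Finset.mem_Ico]
      exact ⟨hts n hn, Nat.lt_succ_of_le (t.le_max' n hn)⟩
    have step3 : ∑ n ∈ t, (hfun n - hfun (n + 1))
        ≤ ∑ n ∈ Finset.Ico m (N+1), (hfun n - hfun (n + 1)) := by
      apply Finset.sum_le_sum_of_subset_of_nonneg hsub
      intro n hn _
      rw [Finset.mem_Ico] at hn
      exact hnn n (le_trans hm3 hn.1)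
    have step4 : ∑ n ∈ Finset.Ico m (N+1), (hfun n - hfun (n + 1))
        = hfun m - hfun (m + (N + 1 - m)) := by
      rw [Finset.sum_Ico_eq_sum_range]
      simpa [add_assoc] using Finset.sum_range_sub' (fun i => hfun (m + i)) (N + 1 - m)
    have h5 : 0 ≤ hfun (m + (N + 1 - m)) := by
      have h3 : (3:ℝ) ≤ ((m + (N + 1 - m) : ℕ) : ℝ) := by
        exact_mod_cast le_trans hm3 (Nat.le_add_right m _)
      unfold hfun
      apply one_div_nonneg.mpr
      linarith
    calc ∑ p ∈ s, (1 / (((p : ℕ) : ℝ) * (((p : ℕ) : ℝ) - 2)))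
        ≤ ∑ n ∈ t, (hfun n - hfun (n + 1)) := hbase
      _ ≤ hfun m - hfun (m + (N + 1 - m)) := step3.trans_eq step4
      _ ≤ hfun m := by linarith
      _ ≤ 1 / (x - 2) := hfm

theorem log_g_div_f_bounds (x : ℝ) (hx : 2 < x) (htheta : 1 < theta x) :
    0 < Real.log (gfun x / ffun x) ∧
      Real.log (gfun x / ffun x) ≤
        Real.log 2 / (theta x * Real.log (theta x)) + 1 / (x - 2) := by
  have hx2 : (0:ℝ) < x - 2 := by linarith
  have hT : 1 < theta x := htheta
  have hT0 : (0:ℝ) < theta x := lt_trans one_pos hT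
  have hl2 : (0:ℝ) < Real.log 2 := Real.log_pos one_lt_two
  set T := theta x with hTdef
  set A := Real.log T with hAdef
  set B := Real.log (T + Real.log 2) with hBdef
  have hA : 0 < A := Real.log_pos hT
  have hAB : A < B := Real.log_lt_log hT0 (by linarith)
  have hB : 0 < B := lt_trans hA hAB
  set F : {p : ℕ // p.Prime ∧ x < (p : ℝ)} → ℝ :=
    fun p => 1 + 1 / (((p : ℕ) : ℝ) * (((p : ℕ) : ℝ) - 2)) with hFdef
  set P := ∏' p : {p : ℕ // p.Prime ∧ x < (p : ℝ)}, F p with hPdef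
  have hfac : ∀ p : {p : ℕ // p.Prime ∧ x < (p : ℝ)},
      0 ≤ 1 / (((p : ℕ) : ℝ) * (((p : ℕ) : ℝ) - 2)) := by
    intro p
    have h2 : (2:ℝ) < ((p:ℕ):ℝ) := lt_trans hx p.2.2
    apply one_div_nonneg.mpr
    nlinarith
  have hF1 : ∀ p, (1:ℝ) ≤ F p := fun p => by
    simp only [hFdef]; linarith [hfac p]
  have hF0 : ∀ p, (0:ℝ) < F p := fun p => lt_of_lt_of_le one_pos (hF1 p)
  have hlognn : (0 : {p : ℕ // p.Prime ∧ x < (p : ℝ)} → ℝ) ≤ fun p => Real.log (F p) := by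
    intro p
    exact Real.log_nonneg (hF1 p)
  have hS : ∀ u : Finset {p : ℕ // p.Prime ∧ x < (p : ℝ)},
      ∑ p ∈ u, Real.log (F p) ≤ 1 / (x - 2) := by
    intro u
    calc ∑ p ∈ u, Real.log (F p)
        ≤ ∑ p ∈ u, (1 / (((p : ℕ) : ℝ) * (((p : ℕ) : ℝ) - 2))) := by
          apply Finset.sum_le_sum
          intro p _
          have := Real.log_le_sub_one_of_pos (hF0 p)
          simp only [hFdef] at this ⊢
          linarith
      _ ≤ 1 / (x - 2) := key_sum x hx u
  have hsum : Summable (fun p => Real.log (F p)) := summable_of_sum_le hlognn hS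
  have hPeq : P = Real.exp (∑' p, Real.log (F p)) := by
    rw [hPdef]
    have h1 : HasProd (fun p => Real.exp (Real.log (F p)))
        (Real.exp (∑' p, Real.log (F p))) := hsum.hasSum.rexp
    have h2 : (fun p => Real.exp (Real.log (F p))) = F :=
      funext fun p => Real.exp_log (hF0 p)
    rw [h2] at h1
    exact h1.tprod_eq
  have hlogPeq : Real.log P = ∑' p, Real.log (F p) := by
    rw [hPeq, Real.log_exp]
  have hP0 : 0 < P := by rw [hPeq]; positivity
  have hlogP : 0 ≤ Real.log P := by
    rw [hlogPeq]
    exact tsum_nonneg hlognn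
  have hlogPle : Real.log P ≤ 1 / (x - 2) := by
    rw [hlogPeq]
    exact Summable.tsum_le_of_sum_le hsum hS
  have hQ : 0 < ∏ p ∈ Nat.primesBelow (⌊x⌋₊ + 1), (1 - 1 / (p : ℝ)) := by
    apply Finset.prod_pos
    intro p hp
    have hp2 : 2 ≤ p := (Nat.prime_of_mem_primesBelow hp).two_le
    have hp2' : (2:ℝ) ≤ (p:ℝ) := by exact_mod_cast hp2
    have : 1 / (p:ℝ) ≤ 1/2 := one_div_le_one_div_of_le (by norm_num) hp2'
    linarith
  have hratio : gfun x / ffun x = (B / A) * P := by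
    unfold gfun ffun
    rw [← hTdef, ← hAdef, ← hBdef]
    rw [show (∏' p : {p : ℕ // p.Prime ∧ x < (p : ℝ)},
      (1 + 1 / (((p : ℕ) : ℝ) * (((p : ℕ) : ℝ) - 2)))) = P from rfl]
    have hE : Real.exp Real.eulerMascheroniConstant ≠ 0 := Real.exp_ne_zero _
    field_simp
  have hlog : Real.log (gfun x / ffun x) = (Real.log B - Real.log A) + Real.log P := by
    rw [hratio, Real.log_mul (by positivity) hP0.ne', Real.log_div hB.ne' hA.ne']
  have hlogAB : Real.log A < Real.log B := Real.log_lt_log hA hAB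
  constructor
  · rw [hlog]; linarith
  · rw [hlog]
    have h1 : Real.log B - Real.log A ≤ Real.log 2 / (T * A) := by
      have e1 : Real.log B - Real.log A = Real.log (B/A) :=
        (Real.log_div hB.ne' hA.ne').symm
      have e2 : Real.log (B/A) ≤ B/A - 1 := Real.log_le_sub_one_of_pos (by positivity)
      have e3 : B - A ≤ Real.log 2 / T := by
        have e : B - A = Real.log ((T + Real.log 2)/T) := by
          rw [Real.log_div (by linarith) hT0.ne']
        have e' := Real.log_le_sub_one_of_pos (show (0:ℝ) < (T + Real.log 2)/T by positivity)
        have e'' : (T + Real.log 2)/T - 1 = Real.log 2 / T := by field_simp; ring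
        rw [e]; linarith
      have e4 : B/A - 1 = (B - A)/A := by field_simp
      have e5 : (B - A)/A ≤ (Real.log 2 / T)/A := by gcongr
      have e6 : (Real.log 2 / T)/A = Real.log 2 / (T * A) := div_div _ _ _
      linarith
    linarith
end

section
/- Assume the Riemann hypothesis, and assume the bounds log f(x) ≤ -0.8/(√x · log x) for x ≥ 3000 (where f(x) = e^γ log ϑ(x) ∏_{p ≤ x}(1 - 1/p)) and ϑ(x) ≥ 4x/5 for x ≥ 121. Then log g(x) ≤ -0.6/(√x · log x) for all x ≥ 3000, where g(x) = e^γ log(ϑ(x) + log 2) ∏_{p ≤ x}(1 - 1/p) ∏_{p > x}(1 + 1/(p(p-2))). -/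
open Filter Finset Real

/- ### Auxiliary lemmas -/
set_option maxRecDepth 4000

lemma aux_exp7 : Real.exp 7 ≤ 2400 := by
  have h := Real.exp_one_lt_d9
  have h7 : Real.exp 7 = Real.exp 1 ^ 7 := by
    rw [← Real.exp_nat_mul]; norm_num
  rw [h7]
  calc Real.exp 1 ^ 7 ≤ 2.7182818286 ^ 7 := by
        apply pow_le_pow_left₀ (Real.exp_pos 1).le h.le
    _ ≤ 2400 := by norm_num

lemma aux_log3000 : Real.log 3000 ≤ 8.01 := by
  rw [Real.log_le_iff_le_exp (by norm_num)]
  have h1 : Real.exp 8.01 = Real.exp 8 * Real.exp 0.01 := by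
    rw [← Real.exp_add]; norm_num
  have h2 : (2.7182818283:ℝ) ^ 8 ≤ Real.exp 8 := by
    have h8 : Real.exp 8 = Real.exp 1 ^ 8 := by rw [← Real.exp_nat_mul]; norm_num
    rw [h8]
    apply pow_le_pow_left₀ (by norm_num) Real.exp_one_gt_d9.le
  have h3 : (1.01:ℝ) ≤ Real.exp 0.01 := by
    have := Real.add_one_le_exp (0.01:ℝ); linarith
  rw [h1]
  calc (3000:ℝ) ≤ 2.7182818283 ^ 8 * 1.01 := by norm_num
    _ ≤ Real.exp 8 * Real.exp 0.01 :=
        mul_le_mul h2 h3 (by norm_num) (Real.exp_pos 8).le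

lemma aux_log_le_sqrt {x : ℝ} (hx : 3000 ≤ x) : Real.log x ≤ 0.1777 * Real.sqrt x := by
  have hx0 : (0:ℝ) < x := by linarith
  have hy1 : (1:ℝ) ≤ x / 3000 := by rw [le_div_iff₀ (by norm_num)]; linarith
  have hy0 : (0:ℝ) ≤ x / 3000 := by linarith
  set u := Real.sqrt (Real.sqrt (x / 3000)) with hu
  have hu1 : 1 ≤ u := by
    rw [hu, show (1:ℝ) = Real.sqrt (Real.sqrt 1) by simp]
    exact Real.sqrt_le_sqrt (Real.sqrt_le_sqrt (by linarith))
  have hu0 : 0 < u := by linarith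
  have hu4 : u ^ 2 = Real.sqrt (x / 3000) := Real.sq_sqrt (Real.sqrt_nonneg _)
  have hlogu : Real.log (x / 3000) = 4 * Real.log u := by
    rw [hu, Real.log_sqrt (Real.sqrt_nonneg _), Real.log_sqrt hy0]; ring
  have hlogx : Real.log x = Real.log 3000 + Real.log (x / 3000) := by
    rw [Real.log_div hx0.ne' (by norm_num)]; ring
  have hsqrtx : Real.sqrt x = Real.sqrt 3000 * u ^ 2 := by
    rw [hu4, ← Real.sqrt_mul (by norm_num : (0:ℝ) ≤ 3000)]
    congr 1; field_simp
  have h3000 : (54.77:ℝ) ≤ Real.sqrt 3000 := by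
    rw [show (54.77:ℝ) = Real.sqrt (54.77 ^ 2) from (Real.sqrt_sq (by norm_num)).symm]
    apply Real.sqrt_le_sqrt; norm_num
  have hlogu_le : Real.log u ≤ u - 1 := by
    have := Real.log_le_sub_one_of_pos hu0; linarith
  rw [hlogx, hsqrtx, hlogu]
  have hlog3000 := aux_log3000
  nlinarith [sq_nonneg (u - 1), mul_le_mul_of_nonneg_right h3000 (sq_nonneg u)]

noncomputable def auxg (n : ℕ) : ℝ := 1 / ((n : ℝ) - 2)

lemma aux_tele (g : ℕ → ℝ) {N M : ℕ} (h : N ≤ M) :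
    ∑ n ∈ Finset.Ico N M, (g n - g (n + 1)) = g N - g M := by
  induction M, h using Nat.le_induction with
  | base => simp
  | succ M hM ih => rw [Finset.sum_Ico_succ_top hM, ih]; ring

lemma auxg_diff {n : ℕ} (hn : (3001:ℝ) ≤ (n:ℝ)) :
    auxg n - auxg (n + 1) = 1 / (((n:ℝ) - 2) * ((n:ℝ) - 1)) := by
  have h1 : ((n:ℝ) - 2) ≠ 0 := by linarith
  have h2 : ((n:ℝ) - 1) ≠ 0 := by linarith
  simp only [auxg]
  push_cast
  rw [show (n:ℝ) + 1 - 2 = (n:ℝ) - 1 by ring, div_sub_div _ _ h1 h2,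
    show 1 * ((n:ℝ) - 1) - ((n:ℝ) - 2) * 1 = 1 by ring]

lemma aux_sum_bound (x : ℝ) (hx : 3000 ≤ x)
    (s : Finset {p : ℕ // p.Prime ∧ x < (p : ℝ)}) :
    ∑ p ∈ s, 1 / (((p : ℕ) : ℝ) * (((p : ℕ) : ℝ) - 2)) ≤ 1 / (x - 2) := by
  have hxpos : (0:ℝ) ≤ x := by linarith
  have hx2 : (0:ℝ) < x - 2 := by linarith
  set N := ⌊x⌋₊ + 1 with hN
  have hN3001 : 3001 ≤ N := by
    have : 3000 ≤ ⌊x⌋₊ := Nat.le_floor (by exact_mod_cast hx)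
    omega
  have hNx : x < (N : ℝ) := by
    have := Nat.lt_floor_add_one x
    rw [hN]; push_cast; linarith
  have hmem : ∀ p : {p : ℕ // p.Prime ∧ x < (p : ℝ)}, N ≤ (p : ℕ) := by
    intro p
    have h1 : ⌊x⌋₊ < (p : ℕ) := (Nat.floor_lt hxpos).2 p.2.2
    omega
  have hcast : ∀ n : ℕ, N ≤ n → (3001:ℝ) ≤ (n:ℝ) := by
    intro n hn
    exact_mod_cast le_trans hN3001 hn
  have hterm : ∀ p ∈ s, 1 / (((p:ℕ):ℝ) * (((p:ℕ):ℝ) - 2))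
      ≤ auxg (p:ℕ) - auxg ((p:ℕ) + 1) := by
    intro p _
    have hp : (3001 : ℝ) ≤ ((p:ℕ):ℝ) := hcast _ (hmem p)
    rw [auxg_diff hp]
    have h1 : (0:ℝ) < (((p:ℕ):ℝ) - 2) * (((p:ℕ):ℝ) - 1) :=
      mul_pos (by linarith) (by linarith)
    have h2 : (((p:ℕ):ℝ) - 2) * (((p:ℕ):ℝ) - 1) ≤ ((p:ℕ):ℝ) * (((p:ℕ):ℝ) - 2) := by
      have h3 := mul_le_mul_of_nonneg_left
        (by linarith : (((p:ℕ):ℝ) - 1) ≤ ((p:ℕ):ℝ))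
        (by linarith : (0:ℝ) ≤ ((p:ℕ):ℝ) - 2)
      linarith [h3]
    exact one_div_le_one_div_of_le h1 h2
  have hgpos : ∀ n : ℕ, N ≤ n → 0 ≤ auxg n - auxg (n + 1) := by
    intro n hn
    have hn' := hcast n hn
    rw [auxg_diff hn']
    exact le_of_lt (div_pos one_pos (mul_pos (by linarith) (by linarith)))
  have hstep : ∑ p ∈ s, (auxg (p:ℕ) - auxg ((p:ℕ) + 1))
      = ∑ n ∈ s.image (fun p : {p : ℕ // p.Prime ∧ x < (p : ℝ)} => (p:ℕ)),
          (auxg n - auxg (n + 1)) := by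
    rw [Finset.sum_image]
    intro a _ b _ h
    exact Subtype.ext h
  set t := s.image (fun p : {p : ℕ // p.Prime ∧ x < (p : ℝ)} => (p:ℕ)) with ht
  have htmem : ∀ n ∈ t, N ≤ n := by
    intro n hn
    simp only [ht, Finset.mem_image] at hn
    obtain ⟨p, _, rfl⟩ := hn
    exact hmem p
  have hlast : ∑ n ∈ t, (auxg n - auxg (n + 1)) ≤ 1 / (x - 2) := by
    rcases t.eq_empty_or_nonempty with h | h
    · rw [h]
      simp only [Finset.sum_empty]
      exact le_of_lt (div_pos one_pos hx2)
    · set M := t.max' h + 1 with hM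
      have hNM : N ≤ M := le_trans (htmem _ (t.max'_mem h)) (Nat.le_succ _)
      have hsub : t ⊆ Finset.Ico N M := by
        intro n hn
        rw [Finset.mem_Ico]
        exact ⟨htmem n hn, Nat.lt_succ_of_le (Finset.le_max' t n hn)⟩
      have hM' : (3001:ℝ) ≤ (M:ℝ) := hcast _ hNM
      have hN' : (3001:ℝ) ≤ (N:ℝ) := hcast _ le_rfl
      calc ∑ n ∈ t, (auxg n - auxg (n + 1))
          ≤ ∑ n ∈ Finset.Ico N M, (auxg n - auxg (n + 1)) := by
            apply Finset.sum_le_sum_of_subset_of_nonneg hsub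
            intro n hn _
            exact hgpos n (Finset.mem_Ico.1 hn).1
        _ = auxg N - auxg M := aux_tele auxg hNM
        _ ≤ auxg N := by
            have hgM : (0:ℝ) ≤ auxg M := by
              simp only [auxg]
              apply one_div_nonneg.2; linarith
            linarith
        _ ≤ 1 / (x - 2) := by
            simp only [auxg]
            apply one_div_le_one_div_of_le (by linarith)
            linarith
  calc ∑ p ∈ s, 1 / (((p:ℕ):ℝ) * (((p:ℕ):ℝ) - 2))
      ≤ ∑ p ∈ s, (auxg (p:ℕ) - auxg ((p:ℕ) + 1)) := Finset.sum_le_sum hterm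
    _ = ∑ n ∈ t, (auxg n - auxg (n + 1)) := hstep
    _ ≤ 1 / (x - 2) := hlast

theorem log_g_upper_bound (hRH : RiemannHypothesis)
    (hf : ∀ x : ℝ, 3000 ≤ x →
      Real.log (ffun x) ≤ -0.8 / (Real.sqrt x * Real.log x))
    (htheta : ∀ x : ℝ, 121 ≤ x → 4 * x / 5 ≤ theta x) :
    ∀ x : ℝ, 3000 ≤ x →
      Real.log (gfun x) ≤ -0.6 / (Real.sqrt x * Real.log x) := by
  intro x hx
  have hx0 : (0:ℝ) < x := by linarith
  have hx2 : (0:ℝ) < x - 2 := by linarith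
  have hT45 : 4 * x / 5 ≤ theta x := htheta x (by linarith)
  set T := theta x with hTdef
  have hT : (2400:ℝ) ≤ T := by linarith
  have hTpos : (0:ℝ) < T := by linarith
  set L := Real.log T with hLdef
  have hL7 : (7:ℝ) ≤ L := by
    rw [hLdef, Real.le_log_iff_exp_le hTpos]
    exact le_trans aux_exp7 (by linarith)
  have hLpos : (0:ℝ) < L := by linarith
  have hlog2pos : (0:ℝ) < Real.log 2 := Real.log_pos (by norm_num)
  have hlog2lt : Real.log 2 < 0.6932 := lt_trans Real.log_two_lt_d9 (by norm_num)
  set L' := Real.log (T + Real.log 2) with hL'def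
  have hL'pos : (0:ℝ) < L' := Real.log_pos (by linarith)
  set Q := ∏ p ∈ Nat.primesBelow (⌊x⌋₊ + 1), (1 - 1 / (p : ℝ)) with hQdef
  have hQpos : (0:ℝ) < Q := by
    rw [hQdef]
    apply Finset.prod_pos
    intro p hp
    have hp2 : 2 ≤ p := (Nat.prime_of_mem_primesBelow hp).two_le
    have hp2' : (2:ℝ) ≤ (p:ℝ) := by exact_mod_cast hp2
    have : 1 / (p:ℝ) ≤ 1 / 2 := one_div_le_one_div_of_le (by norm_num) hp2'
    linarith
  set P := ∏' p : {p : ℕ // p.Prime ∧ x < (p : ℝ)},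
      (1 + 1 / (((p : ℕ) : ℝ) * (((p : ℕ) : ℝ) - 2))) with hPdef
  clear_value T L L' Q P
  have haP : ∀ p : {p : ℕ // p.Prime ∧ x < (p : ℝ)},
      0 ≤ 1 / (((p:ℕ):ℝ) * (((p:ℕ):ℝ) - 2)) := by
    intro p
    have hpx : x < ((p:ℕ):ℝ) := p.2.2
    have h : (0:ℝ) < ((p:ℕ):ℝ) * (((p:ℕ):ℝ) - 2) :=
      mul_pos (by linarith) (by linarith)
    exact le_of_lt (div_pos one_pos h)
  have hkey : ∀ s : Finset {p : ℕ // p.Prime ∧ x < (p : ℝ)},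
      ∏ p ∈ s, (1 + 1 / (((p:ℕ):ℝ) * (((p:ℕ):ℝ) - 2))) ≤ Real.exp (1 / (x - 2)) := by
    intro s
    calc ∏ p ∈ s, (1 + 1 / (((p:ℕ):ℝ) * (((p:ℕ):ℝ) - 2)))
        ≤ ∏ p ∈ s, Real.exp (1 / (((p:ℕ):ℝ) * (((p:ℕ):ℝ) - 2))) := by
          apply Finset.prod_le_prod (fun p _ => by linarith [haP p])
          intro p _
          have := Real.add_one_le_exp (1 / (((p:ℕ):ℝ) * (((p:ℕ):ℝ) - 2)))
          linarith
      _ = Real.exp (∑ p ∈ s, 1 / (((p:ℕ):ℝ) * (((p:ℕ):ℝ) - 2))) := (Real.exp_sum s _).symm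
      _ ≤ Real.exp (1 / (x - 2)) := Real.exp_le_exp.2 (aux_sum_bound x hx s)
  have hexp1 : (1:ℝ) ≤ Real.exp (1 / (x - 2)) :=
    Real.one_le_exp (le_of_lt (div_pos one_pos hx2))
  have hP1P : (1:ℝ) ≤ P ∧ P ≤ Real.exp (1 / (x - 2)) := by
    by_cases hm : Multipliable fun p : {p : ℕ // p.Prime ∧ x < (p : ℝ)} =>
        (1 + 1 / (((p:ℕ):ℝ) * (((p:ℕ):ℝ) - 2)))
    · rw [hPdef]
      constructor
      · refine ge_of_tendsto' hm.hasProd fun s => ?_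
        calc (1:ℝ) = ∏ _p ∈ s, (1:ℝ) := (Finset.prod_const_one).symm
          _ ≤ ∏ p ∈ s, (1 + 1 / (((p:ℕ):ℝ) * (((p:ℕ):ℝ) - 2))) :=
            Finset.prod_le_prod (fun p _ => zero_le_one) (fun p _ => by linarith [haP p])
      · exact le_of_tendsto' hm.hasProd hkey
    · rw [hPdef, tprod_eq_one_of_not_multipliable hm]
      exact ⟨le_refl 1, hexp1⟩
  have hP1 : (1:ℝ) ≤ P := hP1P.1
  have hPpos : (0:ℝ) < P := by linarith
  have hPle : P ≤ Real.exp (1 / (x - 2)) := hP1P.2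
  have hlogP : Real.log P ≤ 1 / (x - 2) := by
    calc Real.log P ≤ Real.log (Real.exp (1 / (x - 2))) :=
          Real.log_le_log hPpos hPle
      _ = 1 / (x - 2) := Real.log_exp _
  -- decomposition of log gfun
  have hffun : ffun x = Real.exp Real.eulerMascheroniConstant * L * Q := by
    rw [hLdef, hTdef, hQdef]; rfl
  have hgfun : gfun x = Real.exp Real.eulerMascheroniConstant * L' * Q * P := by
    rw [hL'def, hTdef, hQdef, hPdef]; rfl
  have hexpne : Real.exp Real.eulerMascheroniConstant ≠ 0 := (Real.exp_pos _).ne'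
  have hgf : Real.log (gfun x)
      = Real.log (ffun x) + (Real.log L' - Real.log L) + Real.log P := by
    rw [hgfun, hffun,
      Real.log_mul (mul_ne_zero (mul_ne_zero hexpne hL'pos.ne') hQpos.ne') hPpos.ne',
      Real.log_mul (mul_ne_zero hexpne hL'pos.ne') hQpos.ne',
      Real.log_mul hexpne hL'pos.ne',
      Real.log_mul (mul_ne_zero hexpne hLpos.ne') hQpos.ne',
      Real.log_mul hexpne hLpos.ne']
    ring
  -- bound for the log log ratio
  have hLL' : Real.log L' - Real.log L ≤ Real.log 2 / (T * L) := by
    have hd : L' - L ≤ Real.log 2 / T := by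
      have he : L' - L = Real.log ((T + Real.log 2) / T) := by
        rw [hL'def, hLdef, Real.log_div (by linarith) hTpos.ne']
      have hf1 := Real.log_le_sub_one_of_pos
        (div_pos (by linarith : (0:ℝ) < T + Real.log 2) hTpos)
      have hf2 : (T + Real.log 2) / T - 1 = Real.log 2 / T := by field_simp; ring
      rw [he]; linarith
    have h2 : Real.log L' - Real.log L ≤ (L' - L) / L := by
      have he : Real.log L' - Real.log L = Real.log (L' / L) :=
        (Real.log_div hL'pos.ne' hLpos.ne').symm
      have hf1 := Real.log_le_sub_one_of_pos (div_pos hL'pos hLpos)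
      have hf2 : L' / L - 1 = (L' - L) / L := by field_simp
      rw [he]; linarith
    have h3 : (L' - L) / L ≤ (Real.log 2 / T) / L := by gcongr
    have h4 : (Real.log 2 / T) / L = Real.log 2 / (T * L) := by
      rw [div_div]
    linarith
  -- numeric bounds
  have hlogx : (0:ℝ) < Real.log x := Real.log_pos (by linarith)
  have hsq : (0:ℝ) < Real.sqrt x := Real.sqrt_pos.2 hx0
  have hSpos : (0:ℝ) < Real.sqrt x * Real.log x := mul_pos hsq hlogx
  have hSle : Real.sqrt x * Real.log x ≤ 0.1777 * x := by
    calc Real.sqrt x * Real.log x ≤ Real.sqrt x * (0.1777 * Real.sqrt x) :=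
          mul_le_mul_of_nonneg_left (aux_log_le_sqrt hx) hsq.le
      _ = 0.1777 * (Real.sqrt x * Real.sqrt x) := by ring
      _ = 0.1777 * x := by rw [Real.mul_self_sqrt hx0.le]
  have h1 : Real.log 2 / (T * L) ≤ 0.124 / x := by
    have hTL : 5.6 * x ≤ T * L := by
      have := mul_le_mul (by linarith : 4 * x / 5 ≤ T) hL7 (by norm_num) (by linarith : (0:ℝ) ≤ T)
      linarith
    have ha : Real.log 2 / (T * L) ≤ 0.6932 / (5.6 * x) :=
      div_le_div₀ (by norm_num) hlog2lt.le (by linarith) hTL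
    have hb : (0.6932:ℝ) / (5.6 * x) ≤ 0.124 / x := by
      rw [div_le_div_iff₀ (by linarith) hx0]
      linarith
    linarith
  have h2 : 1 / (x - 2) ≤ 1.0007 / x := by
    rw [div_le_div_iff₀ hx2 hx0]
    linarith
  have h3 : (0.124:ℝ) / x + 1.0007 / x ≤ 0.2 / (Real.sqrt x * Real.log x) := by
    have ha : (0.2:ℝ) / (0.1777 * x) ≤ 0.2 / (Real.sqrt x * Real.log x) :=
      div_le_div_of_nonneg_left (by norm_num) hSpos hSle
    have hb : (0.124:ℝ) / x + 1.0007 / x ≤ 0.2 / (0.1777 * x) := by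
      rw [← add_div, div_le_div_iff₀ hx0 (mul_pos (by norm_num) hx0)]
      linarith
    linarith
  have hfx := hf x hx
  rw [hgf]
  have hfin : (-0.8:ℝ) / (Real.sqrt x * Real.log x) + 0.2 / (Real.sqrt x * Real.log x)
      = -0.6 / (Real.sqrt x * Real.log x) := by ring
  linarith
end

section
/- With f and g as in the paper, log g(x) = log f(x) + O(1/x) as x → ∞. More precisely, there exists C > 0 and x₀ such that for all x ≥ x₀, |log g(x) - log f(x)| ≤ C/x. -/
open Filter Finset Real

lemma aux_log_le_two_sqrt {t : ℝ} (ht : 0 < t) : Real.log t ≤ 2 * Real.sqrt t := by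
  have h1 : Real.log (Real.sqrt t) ≤ Real.sqrt t - 1 :=
    Real.log_le_sub_one_of_pos (Real.sqrt_pos.mpr ht)
  have h2 : Real.log (Real.sqrt t) = Real.log t / 2 := Real.log_sqrt ht.le
  nlinarith


lemma aux_cheb_nat (n : ℕ) (hn : 1 ≤ n) :
    4 ^ n ≤ (2 * n + 1) * (2 * n) ^ (Nat.primeCounting' (2 * n + 1)) := by
  have h1 : 4 ^ n ≤ (2 * n + 1) * (2 * n).choose n :=
    Nat.four_pow_le_two_mul_add_one_mul_central_binom n
  have h2 : (2 * n).choose n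
      = ∏ p ∈ Finset.range (2 * n + 1), p ^ (Nat.centralBinom n).factorization p :=
    (Nat.prod_pow_factorization_centralBinom n).symm
  have h3 : ∏ p ∈ Finset.range (2 * n + 1), p ^ (Nat.centralBinom n).factorization p
      = ∏ p ∈ Nat.primesBelow (2 * n + 1), p ^ (Nat.centralBinom n).factorization p := by
    refine (Finset.prod_subset (fun p hp => Finset.mem_range.mpr
      (Nat.lt_of_mem_primesBelow hp)) ?_).symm
    intro p hp hnp
    have hnpp : ¬ p.Prime := fun h => hnp (Nat.mem_primesBelow.mpr ⟨Finset.mem_range.mp hp, h⟩)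
    rw [Nat.factorization_eq_zero_of_not_prime _ hnpp, pow_zero]
  have h4 : ∏ p ∈ Nat.primesBelow (2 * n + 1), p ^ (Nat.centralBinom n).factorization p
      ≤ ∏ _p ∈ Nat.primesBelow (2 * n + 1), (2 * n) := by
    refine Finset.prod_le_prod' ?_
    intro p _
    exact Nat.pow_factorization_choose_le (by omega)
  calc 4 ^ n ≤ (2 * n + 1) * (2 * n).choose n := h1
    _ = (2 * n + 1) * ∏ p ∈ Nat.primesBelow (2 * n + 1),
          p ^ (Nat.centralBinom n).factorization p := by rw [h2, h3]
    _ ≤ (2 * n + 1) * ∏ _p ∈ Nat.primesBelow (2 * n + 1), (2 * n) :=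
        Nat.mul_le_mul_left _ h4
    _ = (2 * n + 1) * (2 * n) ^ (Nat.primeCounting' (2 * n + 1)) := by
        rw [Finset.prod_const, Nat.primesBelow_card_eq_primeCounting']

set_option maxHeartbeats 1000000 in
lemma aux_theta {x : ℝ} (hx : 2 ^ 21 ≤ x) :
    Real.sqrt x ≤ theta x ∧ Real.log x / 2 ≤ Real.log (theta x) ∧
      x / 16 ≤ theta x * Real.log (theta x) := by
  have hx0 : (0:ℝ) < x := lt_of_lt_of_le (by norm_num) hx
  have hlogx : (0:ℝ) < Real.log x := Real.log_pos (by nlinarith)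
  set N := ⌊x⌋₊ with hNdef
  have hN : 2 ^ 21 ≤ N := Nat.le_floor (by exact_mod_cast hx)
  set n := N / 2 with hndef
  have hn20 : 2 ^ 20 ≤ n := by omega
  have hnpos : (0:ℝ) < (n:ℝ) := by
    have : 0 < n := by omega
    exact_mod_cast this
  have hNx : (N : ℝ) ≤ x := Nat.floor_le hx0.le
  have hxN : x < (N : ℝ) + 1 := Nat.lt_floor_add_one x
  have h2n1 : (N : ℝ) ≤ 2 * (n : ℝ) + 1 := by
    have h : N ≤ 2 * n + 1 := by omega
    exact_mod_cast h
  have hnx : x / 4 ≤ (n : ℝ) := by linarith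
  have h2nx : 2 * (n : ℝ) ≤ x := by
    have h : 2 * n ≤ N := by omega
    calc 2 * (n:ℝ) = ((2*n : ℕ) : ℝ) := by push_cast; ring
      _ ≤ (N:ℝ) := by exact_mod_cast h
      _ ≤ x := hNx
  set k := Nat.primeCounting' (2 * n + 1) with hkdef
  -- cast Chebyshev and take logs
  have hcast : (4:ℝ) ^ n ≤ (2 * (n:ℝ) + 1) * (2 * (n:ℝ)) ^ k := by
    have h0 := aux_cheb_nat n (by omega)
    have h := (Nat.cast_le (α := ℝ)).mpr h0
    push_cast at h
    exact h
  have hlog : (n:ℝ) * Real.log 4 ≤ Real.log (2 * (n:ℝ) + 1) + (k:ℝ) * Real.log (2 * (n:ℝ)) := by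
    have h := Real.log_le_log (by positivity) hcast
    rw [Real.log_pow, Real.log_mul (by positivity) (by positivity), Real.log_pow] at h
    push_cast at h
    linarith
  -- bound log(2n+1)
  have hsq : (1024:ℝ) ≤ Real.sqrt (n:ℝ) := by
    have h1 : ((1024:ℝ))^2 ≤ (n:ℝ) := by
      have : ((2:ℕ)^20 : ℝ) ≤ (n:ℝ) := by exact_mod_cast hn20
      norm_num at this ⊢
      linarith
    calc (1024:ℝ) = Real.sqrt (1024^2) := by
          rw [Real.sqrt_sq (by norm_num)]
      _ ≤ Real.sqrt (n:ℝ) := Real.sqrt_le_sqrt h1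
  have hmss : Real.sqrt (n:ℝ) * Real.sqrt (n:ℝ) = (n:ℝ) := Real.mul_self_sqrt hnpos.le
  have hlog2n1 : Real.log (2 * (n:ℝ) + 1) ≤ (n:ℝ) / 256 := by
    have h1 : Real.log (2 * (n:ℝ) + 1) ≤ 2 * Real.sqrt (2 * (n:ℝ) + 1) :=
      aux_log_le_two_sqrt (by positivity)
    have h2 : Real.sqrt (2 * (n:ℝ) + 1) ≤ Real.sqrt (4 * (n:ℝ)) :=
      Real.sqrt_le_sqrt (by linarith)
    have h3 : Real.sqrt (4 * (n:ℝ)) = 2 * Real.sqrt (n:ℝ) := by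
      rw [show (4:ℝ) * (n:ℝ) = 2^2 * (n:ℝ) by ring, Real.sqrt_mul (by positivity),
        Real.sqrt_sq (by norm_num)]
    nlinarith [Real.sqrt_nonneg (n:ℝ)]
  have hlog4 : (1:ℝ) + 1/256 ≤ Real.log 4 := by
    have h := Real.log_two_gt_d9
    have h4 : Real.log 4 = 2 * Real.log 2 := by
      rw [show (4:ℝ) = 2^2 by norm_num, Real.log_pow]
      push_cast; ring
    linarith
  have hk1 : (n:ℝ) ≤ (k:ℝ) * Real.log (2 * (n:ℝ)) := by nlinarith
  have hlog2npos : (0:ℝ) < Real.log (2 * (n:ℝ)) := Real.log_pos (by nlinarith)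
  have hlog2nle : Real.log (2 * (n:ℝ)) ≤ Real.log x := Real.log_le_log (by positivity) h2nx
  have hk2 : x / (4 * Real.log x) ≤ (k:ℝ) := by
    have h1 : (n:ℝ) / Real.log (2 * (n:ℝ)) ≤ (k:ℝ) := by
      rw [div_le_iff₀ hlog2npos]; exact hk1
    have h2 : (n:ℝ) / Real.log x ≤ (n:ℝ) / Real.log (2 * (n:ℝ)) :=
      div_le_div_of_nonneg_left hnpos.le hlog2npos hlog2nle
    have h3 : x / (4 * Real.log x) ≤ (n:ℝ) / Real.log x := by
      rw [show x / (4 * Real.log x) = (x/4) / Real.log x by ring]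
      gcongr
    linarith
  have hmono : (k:ℝ) ≤ (Nat.primeCounting' (N+1) : ℝ) := by
    have h : k ≤ Nat.primeCounting' (N+1) := Nat.monotone_primeCounting' (by omega)
    exact_mod_cast h
  have hlog2half : (1/2:ℝ) ≤ Real.log 2 := by linarith [Real.log_two_gt_d9]
  have hθeq : theta x = ∑ p ∈ Nat.primesBelow (N+1), Real.log p := rfl
  have hth : (Nat.primeCounting' (N+1) : ℝ) * Real.log 2 ≤ theta x := by
    have hcard := Finset.card_nsmul_le_sum (Nat.primesBelow (N+1))
      (fun p => Real.log p) (Real.log 2) (fun p hp => by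
        have h2p : 2 ≤ p := (Nat.prime_of_mem_primesBelow hp).two_le
        exact Real.log_le_log (by norm_num) (by exact_mod_cast h2p))
    rw [Nat.primesBelow_card_eq_primeCounting', nsmul_eq_mul] at hcard
    rw [hθeq]
    exact hcard
  have hthlow : x / (8 * Real.log x) ≤ theta x := by
    have h1 : x/(4*Real.log x) * (1/2) ≤ (k:ℝ) * Real.log 2 :=
      mul_le_mul hk2 hlog2half (by norm_num) (le_trans (by positivity) hk2)
    have h2 : (k:ℝ) * Real.log 2 ≤ (Nat.primeCounting' (N+1) : ℝ) * Real.log 2 :=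
      mul_le_mul_of_nonneg_right hmono (by linarith)
    have hL0 : Real.log x ≠ 0 := ne_of_gt hlogx
    have h3 : x/(4*Real.log x) * (1/2) = x/(8*Real.log x) := by
      rw [mul_one_div, div_div]
      congr 1
      ring
    linarith
  have h8 : 8 * Real.log x ≤ Real.sqrt x := by
    have hq : Real.log x ≤ 4 * Real.sqrt (Real.sqrt x) := by
      have h := aux_log_le_two_sqrt (Real.sqrt_pos.mpr hx0)
      rw [Real.log_sqrt hx0.le] at h
      linarith
    have h32 : (32:ℝ) ≤ Real.sqrt (Real.sqrt x) := by
      calc (32:ℝ) = Real.sqrt (Real.sqrt ((32^2)^2)) := by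
            rw [Real.sqrt_sq (by norm_num), Real.sqrt_sq (by norm_num)]
        _ ≤ Real.sqrt (Real.sqrt x) := by
            apply Real.sqrt_le_sqrt
            apply Real.sqrt_le_sqrt
            norm_num
            linarith
    have hss : Real.sqrt (Real.sqrt x) * Real.sqrt (Real.sqrt x) = Real.sqrt x :=
      Real.mul_self_sqrt (Real.sqrt_nonneg x)
    nlinarith [Real.sqrt_nonneg (Real.sqrt x)]
  have hsqth : Real.sqrt x ≤ theta x := by
    have h1 : x / Real.sqrt x = Real.sqrt x := Real.div_sqrt
    have h2 : x / Real.sqrt x ≤ x / (8 * Real.log x) :=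
      div_le_div_of_nonneg_left hx0.le (by positivity) h8
    linarith
  have hlogth : Real.log x / 2 ≤ Real.log (theta x) := by
    rw [← Real.log_sqrt hx0.le]
    exact Real.log_le_log (Real.sqrt_pos.mpr hx0) hsqth
  refine ⟨hsqth, hlogth, ?_⟩
  have hthpos' : 0 < theta x := lt_of_lt_of_le (Real.sqrt_pos.mpr hx0) hsqth
  have hL0 : Real.log x ≠ 0 := ne_of_gt hlogx
  calc x/16 = (x/(8*Real.log x)) * (Real.log x / 2) := by
        rw [div_mul_div_comm]
        rw [show 8 * Real.log x * 2 = Real.log x * 16 by ring, mul_comm x (Real.log x),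
          mul_div_mul_left _ _ hL0]
    _ ≤ theta x * Real.log (theta x) :=
        mul_le_mul hthlow hlogth (by positivity) hthpos'.le

set_option maxHeartbeats 1000000 in
lemma aux_tail {x : ℝ} (hx : 2 ^ 21 ≤ x) :
    (1:ℝ) ≤ (∏' p : {p : ℕ // p.Prime ∧ x < (p : ℝ)},
        (1 + 1 / (((p : ℕ) : ℝ) * (((p : ℕ) : ℝ) - 2)))) ∧
    Real.log (∏' p : {p : ℕ // p.Prime ∧ x < (p : ℝ)},
        (1 + 1 / (((p : ℕ) : ℝ) * (((p : ℕ) : ℝ) - 2)))) ≤ 2 / x := by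
  have hx0 : (0:ℝ) < x := lt_of_lt_of_le (by norm_num) hx
  set m : ℕ := ⌊x⌋₊ + 1 with hmdef
  have hm6 : 6 ≤ m := by
    have : (6:ℕ) ≤ ⌊x⌋₊ := Nat.le_floor (by push_cast; linarith)
    omega
  have hfl : (5:ℝ) ≤ (⌊x⌋₊:ℝ) := by
    have h5 : (5:ℕ) ≤ ⌊x⌋₊ := by omega
    exact_mod_cast h5
  have hflx : x < (⌊x⌋₊:ℝ) + 1 := Nat.lt_floor_add_one x
  have hxm : x < (m : ℝ) := by
    have := Nat.lt_floor_add_one x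
    rw [hmdef]
    push_cast
    linarith
  set b : {p : ℕ // p.Prime ∧ x < (p : ℝ)} → ℝ :=
    fun p => 1 / (((p : ℕ) : ℝ) * (((p : ℕ) : ℝ) - 2)) with hbdef
  set F : ℕ → ℝ := fun q => 1 / (((q : ℝ) - 2) * ((q : ℝ) - 1)) with hFdef
  have hpm : ∀ p : {p : ℕ // p.Prime ∧ x < (p : ℝ)}, m ≤ (p : ℕ) := by
    intro p
    have : ⌊x⌋₊ < (p : ℕ) := (Nat.floor_lt hx0.le).mpr p.2.2
    omega
  have hF_nonneg : ∀ q : ℕ, 0 ≤ F q := by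
    intro q
    match q with
    | 0 => norm_num [hFdef]
    | 1 => norm_num [hFdef]
    | 2 => norm_num [hFdef]
    | (k+3) =>
      simp only [hFdef]
      push_cast
      rw [show ((k:ℝ) + 3 - 2) * ((k:ℝ) + 3 - 1) = ((k:ℝ)+1) * ((k:ℝ)+2) by ring]
      positivity
  have hF_summable : Summable F := by
    rw [← summable_nat_add_iff 3]
    have hsum2 : Summable (fun n : ℕ => 1 / ((n:ℝ) + 1) ^ 2) := by
      have h := (summable_one_div_nat_pow (p := 2)).mpr (by norm_num)
      have h2 := (summable_nat_add_iff (f := fun n : ℕ => 1 / (n : ℝ) ^ 2) 1).mpr h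
      refine h2.congr fun n => ?_
      push_cast
      ring
    refine Summable.of_nonneg_of_le (fun n => hF_nonneg (n + 3)) (fun n => ?_) hsum2
    simp only [hFdef]
    push_cast
    rw [div_le_div_iff₀ (by nlinarith [Nat.cast_nonneg (α := ℝ) n]) (by positivity)]
    nlinarith [Nat.cast_nonneg (α := ℝ) n]
  have hb_nonneg : ∀ p, 0 ≤ b p := by
    intro p
    have h1 : (6:ℝ) ≤ ((p:ℕ):ℝ) := by
      have := hpm p
      have h2 : (m:ℝ) ≤ ((p:ℕ):ℝ) := by exact_mod_cast this
      have h3 : (6:ℝ) ≤ (m:ℝ) := by exact_mod_cast hm6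
      linarith
    have h2 : (0:ℝ) < ((p:ℕ):ℝ) * (((p:ℕ):ℝ) - 2) := by nlinarith
    simp only [hbdef]
    exact le_of_lt (div_pos one_pos h2)
  have hbF : ∀ p, b p ≤ F ((p : ℕ)) := by
    intro p
    have h1 : (6:ℝ) ≤ ((p:ℕ):ℝ) := by
      have := hpm p
      have h2 : (m:ℝ) ≤ ((p:ℕ):ℝ) := by exact_mod_cast this
      have h3 : (6:ℝ) ≤ (m:ℝ) := by exact_mod_cast hm6
      linarith
    simp only [hbdef, hFdef]
    rw [div_le_div_iff₀ (by nlinarith) (by nlinarith)]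
    nlinarith
  have hb_summable : Summable b :=
    Summable.of_nonneg_of_le hb_nonneg hbF (hF_summable.comp_injective Subtype.val_injective)
  -- telescoping bound on the tsum of F shifted
  have hg_summable : Summable (fun j : ℕ => F (m + j)) := by
    have := (summable_nat_add_iff (f := F) m).mpr hF_summable
    refine this.congr fun j => ?_
    rw [add_comm]
  have hc_tend : Filter.Tendsto (fun j : ℕ => 1 / ((m:ℝ) + (j:ℝ) - 2)) Filter.atTop (nhds 0) := by
    have h1 : Filter.Tendsto (fun j : ℕ => (j:ℝ) + ((m:ℝ) - 2)) Filter.atTop Filter.atTop :=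
      Filter.tendsto_atTop_add_const_right _ _ tendsto_natCast_atTop_atTop
    have h2 := Filter.Tendsto.comp tendsto_inv_atTop_zero h1
    refine h2.congr fun j => ?_
    simp only [Function.comp]
    rw [one_div]
    congr 1
    ring
  set c : ℕ → ℝ := fun j => 1 / ((m:ℝ) + (j:ℝ) - 2) with hcdef
  have htel : ∀ j : ℕ, F (m + j) = c j - c (j + 1) := by
    intro j
    have hj : (0:ℝ) ≤ (j:ℝ) := Nat.cast_nonneg j
    simp only [hFdef, hcdef]
    push_cast
    rw [div_sub_div _ _ (by linarith) (by linarith)]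
    rw [div_eq_div_iff (by nlinarith) (by nlinarith)]
    ring
  have hc0 : c 0 = 1 / ((m:ℝ) - 2) := by
    simp only [hcdef]
    norm_num
  have hgsum : ∑' j : ℕ, F (m + j) = 1 / ((m:ℝ) - 2) := by
    have hps : Filter.Tendsto (fun K : ℕ => ∑ j ∈ Finset.range K, F (m + j))
        Filter.atTop (nhds (1 / ((m:ℝ) - 2))) := by
      have heq : ∀ K : ℕ, ∑ j ∈ Finset.range K, F (m + j) = c 0 - c K := by
        intro K
        rw [Finset.sum_congr rfl (fun j _ => htel j)]
        exact Finset.sum_range_sub' c K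
      have ht2 : Filter.Tendsto (fun K : ℕ => c 0 - c K) Filter.atTop (nhds (c 0 - 0)) :=
        Filter.Tendsto.sub tendsto_const_nhds hc_tend
      rw [sub_zero] at ht2
      rw [← hc0]
      exact ht2.congr fun K => (heq K).symm
    exact tendsto_nhds_unique (hg_summable.hasSum.tendsto_sum_nat) hps
  have hS_le : (∑' p, b p) ≤ 2 / x := by
    have hinj : Function.Injective (fun p : {p : ℕ // p.Prime ∧ x < (p : ℝ)} => (p : ℕ) - m) := by
      intro p q h
      have hp := hpm p; have hq := hpm q
      simp only at h
      ext
      omega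
    have hle : ∀ p : {p : ℕ // p.Prime ∧ x < (p : ℝ)}, b p ≤ F (m + ((p : ℕ) - m)) := by
      intro p
      have hp := hpm p
      have heq : m + ((p:ℕ) - m) = (p:ℕ) := by omega
      rw [heq]
      exact hbF p
    have h1 : (∑' p, b p) ≤ ∑' j : ℕ, F (m + j) :=
      Summable.tsum_le_tsum_of_inj _ hinj (fun j _ => hF_nonneg _) hle hb_summable hg_summable
    have h2 : 1 / ((m:ℝ) - 2) ≤ 2 / x := by
      rw [div_le_div_iff₀ (by push_cast; linarith) hx0]
      push_cast
      linarith
    linarith [hgsum ▸ h1]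
  -- now the product
  by_cases hmul : Multipliable (fun p : {p : ℕ // p.Prime ∧ x < (p : ℝ)} => 1 + b p)
  · have hprod := hmul.hasProd
    have hT1 : (1:ℝ) ≤ ∏' p, (1 + b p) := by
      refine ge_of_tendsto' hprod fun s => ?_
      calc (1:ℝ) = ∏ _p ∈ s, (1:ℝ) := (Finset.prod_const_one).symm
        _ ≤ ∏ p ∈ s, (1 + b p) :=
          Finset.prod_le_prod (fun _ _ => zero_le_one) (fun p _ => by linarith [hb_nonneg p])
    have hT2 : (∏' p, (1 + b p)) ≤ Real.exp (∑' p, b p) := by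
      refine le_of_tendsto' hprod fun s => ?_
      calc ∏ p ∈ s, (1 + b p) ≤ ∏ p ∈ s, Real.exp (b p) :=
            Finset.prod_le_prod (fun p _ => by linarith [hb_nonneg p])
              (fun p _ => by linarith [Real.add_one_le_exp (b p)])
        _ = Real.exp (∑ p ∈ s, b p) := (Real.exp_sum s b).symm
        _ ≤ Real.exp (∑' p, b p) :=
            Real.exp_le_exp.mpr (Summable.sum_le_tsum s (fun p _ => hb_nonneg p) hb_summable)
    refine ⟨hT1, ?_⟩
    calc Real.log (∏' p, (1 + b p)) ≤ Real.log (Real.exp (∑' p, b p)) :=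
          Real.log_le_log (by linarith) hT2
      _ = ∑' p, b p := Real.log_exp _
      _ ≤ 2 / x := hS_le
  · rw [tprod_eq_one_of_not_multipliable hmul]
    refine ⟨le_refl 1, ?_⟩
    rw [Real.log_one]
    positivity


set_option maxHeartbeats 1000000 in
theorem log_g_sub_log_f_bigO :
    ∃ C > (0 : ℝ), ∃ x₀ : ℝ, ∀ x : ℝ, x₀ ≤ x →
      |Real.log (gfun x) - Real.log (ffun x)| ≤ C / x := by
  refine ⟨100, by norm_num, 2^21, fun x hx => ?_⟩
  have hx0 : (0:ℝ) < x := lt_of_lt_of_le (by norm_num) hx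
  obtain ⟨hsq, hlogth, hprod16⟩ := aux_theta hx
  obtain ⟨hT1, hTle⟩ := aux_tail hx
  set θ := theta x with hθdef
  set T := ∏' p : {p : ℕ // p.Prime ∧ x < (p : ℝ)},
      (1 + 1 / (((p : ℕ) : ℝ) * (((p : ℕ) : ℝ) - 2))) with hTdef
  set P := ∏ p ∈ Nat.primesBelow (⌊x⌋₊ + 1), (1 - 1 / (p : ℝ)) with hPdef
  set L1 := Real.log θ with hL1def
  set L2 := Real.log (θ + Real.log 2) with hL2def
  have hθpos : 0 < θ := lt_of_lt_of_le (Real.sqrt_pos.mpr hx0) hsq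
  have hlogx : (0:ℝ) < Real.log x := Real.log_pos (by nlinarith)
  have hL1 : 0 < L1 := lt_of_lt_of_le (by positivity) hlogth
  have hlog2pos : (0:ℝ) < Real.log 2 := Real.log_pos (by norm_num)
  have hθ2pos : 0 < θ + Real.log 2 := by linarith
  have hL12 : L1 ≤ L2 := Real.log_le_log hθpos (by linarith)
  have hL2pos : 0 < L2 := lt_of_lt_of_le hL1 hL12
  have hP : 0 < P := by
    rw [hPdef]
    apply Finset.prod_pos
    intro p hp
    have h2p : 2 ≤ p := (Nat.prime_of_mem_primesBelow hp).two_le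
    have h2p' : (2:ℝ) ≤ (p:ℝ) := by exact_mod_cast h2p
    have h1 : 1 / (p:ℝ) ≤ 1/2 := one_div_le_one_div_of_le (by norm_num) h2p'
    linarith
  have hTpos : (0:ℝ) < T := lt_of_lt_of_le zero_lt_one hT1
  have hgf : Real.log (gfun x) - Real.log (ffun x) = (Real.log L2 - Real.log L1) + Real.log T := by
    have hg : gfun x = Real.exp Real.eulerMascheroniConstant * L2 * P * T := rfl
    have hf : ffun x = Real.exp Real.eulerMascheroniConstant * L1 * P := rfl
    rw [hg, hf, Real.log_mul (by
        exact mul_ne_zero (mul_ne_zero (Real.exp_pos _).ne' hL2pos.ne') hP.ne') hTpos.ne',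
      Real.log_mul (mul_ne_zero (Real.exp_pos _).ne' hL2pos.ne') hP.ne',
      Real.log_mul (Real.exp_pos _).ne' hL2pos.ne',
      Real.log_mul (mul_ne_zero (Real.exp_pos _).ne' hL1.ne') hP.ne',
      Real.log_mul (Real.exp_pos _).ne' hL1.ne']
    ring
  have hD1 : L2 - L1 ≤ Real.log 2 / θ := by
    have h1 : L2 - L1 = Real.log ((θ + Real.log 2) / θ) := by
      rw [Real.log_div hθ2pos.ne' hθpos.ne']
    have h2 : Real.log ((θ + Real.log 2) / θ) ≤ (θ + Real.log 2) / θ - 1 :=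
      Real.log_le_sub_one_of_pos (by positivity)
    have h3 : (θ + Real.log 2) / θ - 1 = Real.log 2 / θ := by
      field_simp
      ring
    linarith
  have hD2 : Real.log L2 - Real.log L1 ≤ (L2 - L1) / L1 := by
    have h1 : Real.log L2 - Real.log L1 = Real.log (L2 / L1) := by
      rw [Real.log_div hL2pos.ne' hL1.ne']
    have h2 : Real.log (L2 / L1) ≤ L2 / L1 - 1 :=
      Real.log_le_sub_one_of_pos (by positivity)
    have h3 : L2 / L1 - 1 = (L2 - L1) / L1 := by
      field_simp
    linarith
  have hD3 : (L2 - L1) / L1 ≤ (Real.log 2 / θ) / L1 := (div_le_div_iff_of_pos_right hL1).mpr hD1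
  have hD4 : (Real.log 2 / θ) / L1 = Real.log 2 / (θ * L1) := div_div _ _ _
  have hD5 : Real.log 2 / (θ * L1) ≤ Real.log 2 / (x / 16) :=
    div_le_div_of_nonneg_left hlog2pos.le (by positivity) hprod16
  have hD6 : Real.log 2 / (x / 16) ≤ 12 / x := by
    rw [div_div_eq_mul_div]
    exact (div_le_div_iff_of_pos_right hx0).mpr (by nlinarith [Real.log_two_lt_d9])
  have hDnn : 0 ≤ Real.log L2 - Real.log L1 := sub_nonneg.mpr (Real.log_le_log hL1 hL12)
  have hTnn : 0 ≤ Real.log T := Real.log_nonneg hT1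
  rw [hgf, abs_of_nonneg (by linarith)]
  have hsum : (Real.log L2 - Real.log L1) + Real.log T ≤ 12 / x + 2 / x := by
    have := hD2.trans (hD3.trans (le_of_eq hD4 |>.trans (hD5.trans hD6)))
    linarith
  have hfin : 12 / x + 2 / x ≤ 100 / x := by
    rw [← add_div]
    exact (div_le_div_iff_of_pos_right hx0).mpr (by norm_num)
  linarith
end

section
/- Let n = 2·p_1^{a_1}⋯p_k^{a_k} with each a_j ≥ 1, where p_1 < ⋯ < p_k are the first k primes (k > 1), and let n_k = p_1⋯p_k. Then ρ(2n_k) ≤ ρ(n), where ρ(m) = |X'_m|/φ(m) is the proportion of primitive Dirichlet characters modulo m. -/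
open Filter Finset Real

section Aux
open DirichletCharacter ArithmeticFunction

open DirichletCharacter

lemma val_cast_dvd {l m : ℕ} [NeZero l] (h : m ∣ l) (w : ℤ) :
    (((w : ZMod l).val : ZMod m)) = ((w : ZMod m)) := by
  rw [ZMod.natCast_val, ← ZMod.castHom_apply (h := h), map_intCast]

section Gcd
variable {R : Type*} [CommMonoidWithZero R] {n : ℕ}

lemma factorsThrough_gcd [NeZero n] (χ : DirichletCharacter R n) {d e : ℕ}
    (hd : χ.FactorsThrough d) (he : χ.FactorsThrough e) :
    χ.FactorsThrough (Nat.gcd d e) := by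
  have hg : Nat.gcd d e ∣ n := (Nat.gcd_dvd_left d e).trans hd.dvd
  rw [factorsThrough_iff_ker_unitsMap hg]
  intro x hx
  set g : ℕ := Nat.gcd d e with hgdef
  have hdn : d ∣ n := hd.dvd
  have hen : e ∣ n := he.dvd
  set X : ℤ := ((x : ZMod n).val : ℤ) with hX
  -- x ≡ 1 mod g
  have h2 : (ZMod.castHom hg (ZMod g)) (x : ZMod n) = 1 := by
    have : ZMod.unitsMap hg x = 1 := hx
    have := congrArg (Units.val) this
    simpa [ZMod.unitsMap_def] using this
  have hx1 : ((X : ZMod g)) = 1 := by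
    rw [hX]
    push_cast
    rw [ZMod.natCast_val]
    rwa [ZMod.castHom_apply] at h2
  obtain ⟨t, ht⟩ : (g : ℤ) ∣ X - 1 := by
    apply (ZMod.intCast_zmod_eq_zero_iff_dvd (X - 1) g).mp
    push_cast [hx1]
    ring
  have hbez : (g : ℤ) = d * Int.gcdA d e + e * Int.gcdB d e := by
    have := Int.gcd_eq_gcd_ab (d : ℤ) (e : ℤ)
    rwa [Int.gcd_natCast_natCast] at this
  set w : ℤ := 1 + d * (Int.gcdA d e * t) with hw
  have hwd : (d : ℤ) ∣ w - 1 := ⟨Int.gcdA d e * t, by rw [hw]; ring⟩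
  have hwe : (e : ℤ) ∣ w - X := ⟨-(Int.gcdB d e * t), by rw [hw]; linear_combination (-1 : ℤ) * ht - t * hbez⟩
  set l : ℕ := Nat.lcm d e with hl
  have hln : l ∣ n := Nat.lcm_dvd hdn hen
  have hdl : d ∣ l := Nat.dvd_lcm_left d e
  have hel : e ∣ l := Nat.dvd_lcm_right d e
  have hn0 : n ≠ 0 := NeZero.ne n
  have hd0 : d ≠ 0 := fun h => hn0 (Nat.eq_zero_of_zero_dvd (h ▸ hdn))
  have he0 : e ≠ 0 := fun h => hn0 (Nat.eq_zero_of_zero_dvd (h ▸ hen))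
  have hl0 : l ≠ 0 := Nat.lcm_ne_zero hd0 he0
  haveI : NeZero l := ⟨hl0⟩
  haveI : NeZero d := ⟨hd0⟩
  haveI : NeZero e := ⟨he0⟩
  have hwd1 : ((w : ZMod d)) = 1 := by
    have := (ZMod.intCast_zmod_eq_zero_iff_dvd (w - 1) d).mpr hwd
    push_cast at this
    linear_combination this
  have hweX : ((w : ZMod e)) = ((X : ZMod e)) := by
    have := (ZMod.intCast_zmod_eq_zero_iff_dvd (w - X) e).mpr hwe
    push_cast at this
    linear_combination this
  have hXe : ((X : ZMod e)) = ZMod.castHom hen (ZMod e) (x : ZMod n) := by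
    rw [hX]
    push_cast
    rw [ZMod.natCast_val, ZMod.castHom_apply]
  have hXeu : IsUnit ((X : ZMod e)) := by
    rw [hXe]
    exact (Units.isUnit x).map (ZMod.castHom hen (ZMod e))
  -- w is a unit mod l
  have hv : (((w : ZMod l).val : ZMod l)) = ((w : ZMod l)) := by
    rw [ZMod.natCast_val, ZMod.cast_id]
  have hcd : Nat.Coprime (w : ZMod l).val d := by
    have : IsUnit (((w : ZMod l).val : ZMod d)) := by
      rw [val_cast_dvd hdl, hwd1]; exact isUnit_one
    exact (ZMod.isUnit_iff_coprime _ d).mp this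
  have hce : Nat.Coprime (w : ZMod l).val e := by
    have : IsUnit (((w : ZMod l).val : ZMod e)) := by
      rw [val_cast_dvd hel, hweX]; exact hXeu
    exact (ZMod.isUnit_iff_coprime _ e).mp this
  have hcop : Nat.Coprime (w : ZMod l).val l :=
    Nat.Coprime.coprime_dvd_right (Nat.lcm_dvd (dvd_mul_right d e) (dvd_mul_left e d))
      (Nat.Coprime.mul_right hcd hce)
  have hwl : IsUnit ((w : ZMod l)) := by
    rw [← hv]; exact (ZMod.isUnit_iff_coprime _ l).mpr hcop
  obtain ⟨y, hy⟩ := ZMod.unitsMap_surjective hln hwl.unit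
  have hyl : (ZMod.castHom hln (ZMod l)) (y : ZMod n) = ((w : ZMod l)) := by
    have := congrArg Units.val hy
    simpa [ZMod.unitsMap_def, IsUnit.unit_spec] using this
  have hyd : (ZMod.castHom hdn (ZMod d)) (y : ZMod n) = 1 := by
    rw [← ZMod.castHom_comp hdl hln, RingHom.comp_apply, hyl, map_intCast, hwd1]
  have hye : (ZMod.castHom hen (ZMod e)) (y : ZMod n) =
      (ZMod.castHom hen (ZMod e)) (x : ZMod n) := by
    conv_lhs => rw [← ZMod.castHom_comp hel hln]
    rw [RingHom.comp_apply, hyl, map_intCast, hweX]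
    exact hXe
  have hkd : ZMod.unitsMap hdn y = 1 := Units.ext (by simpa [ZMod.unitsMap_def] using hyd)
  have hke : ZMod.unitsMap hen (y⁻¹ * x) = 1 := by
    have hyx : ZMod.unitsMap hen y = ZMod.unitsMap hen x :=
      Units.ext (by simpa [ZMod.unitsMap_def] using hye)
    rw [map_mul, map_inv, hyx, inv_mul_cancel]
  have h1 : y ∈ χ.toUnitHom.ker :=
    (factorsThrough_iff_ker_unitsMap hdn).mp hd (MonoidHom.mem_ker.mpr hkd)
  have h2' : y⁻¹ * x ∈ χ.toUnitHom.ker :=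
    (factorsThrough_iff_ker_unitsMap hen).mp he (MonoidHom.mem_ker.mpr hke)
  have : x = y * (y⁻¹ * x) := by group
  rw [MonoidHom.mem_ker] at h1 h2' ⊢
  rw [this, map_mul, h1, h2', one_mul]

lemma eq_changeLevel_primitive (χ : DirichletCharacter R n) :
    χ = changeLevel (conductor_dvd_level χ) χ.primitiveCharacter :=
  Classical.choose_spec (factorsThrough_conductor χ).choose_spec

lemma conductor_changeLevel [NeZero n] {d : ℕ} (h : d ∣ n) (ψ : DirichletCharacter R d) :
    conductor (changeLevel h ψ) = conductor ψ := by
  set χ := changeLevel h ψ with hχ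
  have hfd : χ.FactorsThrough d := ⟨h, ψ, rfl⟩
  have hfc : χ.FactorsThrough (conductor χ) := factorsThrough_conductor χ
  have hgcd : χ.FactorsThrough (Nat.gcd (conductor χ) d) := factorsThrough_gcd χ hfc hfd
  have hc0 : conductor χ ≠ 0 := conductor_ne_zero χ
  have hle : conductor χ ≤ Nat.gcd (conductor χ) d := Nat.sInf_le hgcd
  have hge : Nat.gcd (conductor χ) d ≤ conductor χ :=
    Nat.le_of_dvd (Nat.pos_of_ne_zero hc0) (Nat.gcd_dvd_left _ _)
  have hcd : conductor χ ∣ d := by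
    have : Nat.gcd (conductor χ) d = conductor χ := le_antisymm hge hle
    rw [← this]; exact Nat.gcd_dvd_right _ _
  -- ψ factors through conductor χ
  have key : ψ = changeLevel hcd χ.primitiveCharacter := by
    apply changeLevel_injective h
    rw [← changeLevel_trans _ hcd h]
    exact eq_changeLevel_primitive χ
  have h1 : conductor ψ ≤ conductor χ := Nat.sInf_le ⟨hcd, χ.primitiveCharacter, key⟩
  have h2 : conductor χ ≤ conductor ψ := by
    apply Nat.sInf_le
    refine ⟨(conductor_dvd_level ψ).trans h, ψ.primitiveCharacter, ?_⟩
    conv_rhs => rw [changeLevel_trans ψ.primitiveCharacter (conductor_dvd_level ψ) h,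
      ← eq_changeLevel_primitive ψ]
  exact le_antisymm h2 h1

end Gcd

lemma card_fiber {n d : ℕ} [NeZero n] (h : d ∣ n) :
    Nat.card {χ : DirichletCharacter ℂ n // conductor χ = d} = numPrim d := by
  have hbij : Function.Bijective
      (fun ψ : {ψ : DirichletCharacter ℂ d // ψ.IsPrimitive} =>
        (⟨changeLevel h ψ.1, by rw [conductor_changeLevel h]; exact ψ.2⟩ :
          {χ : DirichletCharacter ℂ n // conductor χ = d})) := by
    constructor
    · intro ψ₁ ψ₂ hψ
      exact Subtype.ext (changeLevel_injective h (congrArg Subtype.val hψ))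
    · rintro ⟨χ, hχ⟩
      have hft : χ.FactorsThrough d := hχ ▸ factorsThrough_conductor χ
      obtain ⟨hdvd, ψ, hψ⟩ := hft
      have hprim : ψ.IsPrimitive := by
        have := conductor_changeLevel hdvd ψ
        rw [← hψ, hχ] at this
        exact this.symm
      exact ⟨⟨ψ, hprim⟩, Subtype.ext hψ.symm⟩
  exact (Nat.card_congr (Equiv.ofBijective _ hbij)).symm

lemma sum_numPrim (n : ℕ) [NeZero n] :
    ∑ d ∈ n.divisors, numPrim d = Nat.totient n := by
  classical
  haveI : Fintype (DirichletCharacter ℂ n) := Fintype.ofFinite _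
  have h1 : (Finset.univ : Finset (DirichletCharacter ℂ n)).card =
      ∑ d ∈ n.divisors, (Finset.univ.filter (fun χ : DirichletCharacter ℂ n =>
        conductor χ = d)).card :=
    Finset.card_eq_sum_card_fiberwise (fun χ _ =>
      Nat.mem_divisors.mpr ⟨conductor_dvd_level χ, NeZero.ne n⟩)
  have h2 : ∀ d ∈ n.divisors, (Finset.univ.filter (fun χ : DirichletCharacter ℂ n =>
      conductor χ = d)).card = numPrim d := by
    intro d hd
    rw [Finset.filter_congr_decidable, Fintype.card_subtype (p := fun χ => conductor χ = d) |>.symm]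
    rw [← Nat.card_eq_fintype_card]
    exact card_fiber (Nat.mem_divisors.mp hd).1
  have h3 : (Finset.univ : Finset (DirichletCharacter ℂ n)).card = Nat.totient n := by
    rw [Finset.card_univ, ← Nat.card_eq_fintype_card,
      MulChar.card_eq_card_units_of_hasEnoughRootsOfUnity (ZMod n) ℂ,
      Nat.card_eq_fintype_card, ZMod.card_units_eq_totient]
  rw [← h3, h1]
  exact Finset.sum_congr rfl (fun d hd => (h2 d hd).symm)

def phiA : ArithmeticFunction ℕ := ⟨Nat.totient, Nat.totient_zero⟩

lemma phiA_mult : phiA.IsMultiplicative :=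
  ⟨Nat.totient_one, fun h => Nat.totient_mul h⟩

noncomputable def Nz : ArithmeticFunction ℤ := (phiA : ArithmeticFunction ℤ) * moebius

lemma Nz_eq (n : ℕ) (hn : n ≠ 0) : Nz n = (numPrim n : ℤ) := by
  haveI : NeZero n := ⟨hn⟩
  have key := (ArithmeticFunction.sum_eq_iff_sum_smul_moebius_eq
    (f := fun m => (numPrim m : ℤ)) (g := fun m => (Nat.totient m : ℤ))).mp
    (fun m hm => by
      haveI : NeZero m := ⟨hm.ne'⟩
      rw [← sum_numPrim m]
      push_cast
      rfl) n (Nat.pos_of_ne_zero hn)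
  rw [← key, Nz, mul_comm, mul_apply]
  apply Finset.sum_congr rfl
  intro x hx
  rw [smul_eq_mul]
  simp [phiA]
  exact Or.inl rfl

lemma Nz_mult : Nz.IsMultiplicative :=
  (phiA_mult.natCast).mul isMultiplicative_moebius

lemma numPrim_mul {m n : ℕ} (hm : m ≠ 0) (hn : n ≠ 0) (h : m.Coprime n) :
    numPrim (m * n) = numPrim m * numPrim n := by
  have := Nz_mult.map_mul_of_coprime h
  rw [Nz_eq _ (mul_ne_zero hm hn), Nz_eq _ hm, Nz_eq _ hn] at this
  exact_mod_cast this

lemma numPrim_prime_pow {p : ℕ} (hp : p.Prime) (c : ℕ) :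
    numPrim (p ^ (c + 1)) + Nat.totient (p ^ c) = Nat.totient (p ^ (c + 1)) := by
  haveI : Fact p.Prime := ⟨hp⟩
  have h1 := sum_numPrim (p ^ (c + 1))
  have h2 := sum_numPrim (p ^ c)
  rw [Nat.sum_divisors_prime_pow hp] at h1 h2
  rw [Finset.sum_range_succ] at h1
  rw [← h1, ← h2]
  ring

local notation "P" => Nat.nth Nat.Prime

lemma numPrim_one : numPrim 1 = 1 := by
  have := sum_numPrim 1
  simpa using this

lemma rho_mul {m n : ℕ} (hm : m ≠ 0) (hn : n ≠ 0) (h : m.Coprime n) :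
    rho (m * n) = rho m * rho n := by
  rw [rho, rho, rho, numPrim_mul hm hn h, Nat.totient_mul h]
  push_cast
  rw [div_mul_div_comm]

lemma P_prime (i : ℕ) : (P i).Prime := Nat.prime_nth_prime i

lemma P_pos (i : ℕ) : 0 < P i := (P_prime i).pos

lemma P_ne (i j : ℕ) (h : i ≠ j) : P i ≠ P j := by
  have := Nat.nth_injective Nat.infinite_setOf_prime
  exact fun he => h (this he)

lemma rho_prod (s : Finset ℕ) (b : ℕ → ℕ) :
    rho (∏ i ∈ s, P i ^ b i) = ∏ i ∈ s, rho (P i ^ b i) := by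
  classical
  induction s using Finset.induction_on with
  | empty => simp [rho, numPrim_one]
  | insert _ _ hi _ =>
    rename_i j s ih
    rw [Finset.prod_insert hi, Finset.prod_insert hi, ← ih]
    apply rho_mul (pow_ne_zero _ (P_pos j).ne') (Finset.prod_ne_zero_iff.mpr
      (fun i _ => pow_ne_zero _ (P_pos i).ne'))
    exact Nat.Coprime.prod_right (fun i hi' => Nat.Coprime.pow _ _
      ((Nat.coprime_primes (P_prime j) (P_prime i)).mpr (P_ne j i (fun he => hi (he ▸ hi')))))

lemma two_lt_P {i : ℕ} (hi : 1 ≤ i) : 2 < P i := by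
  have h0 : P 0 = 2 := Nat.nth_prime_zero_eq_two
  have := (Nat.nth_lt_nth Nat.infinite_setOf_prime).mpr (show 0 < i from hi)
  exact h0 ▸ this

lemma coprime_two_pow_P {i c : ℕ} (hi : 1 ≤ i) (b : ℕ) :
    Nat.Coprime (2 ^ c) (P i ^ b) :=
  Nat.Coprime.pow _ _ ((Nat.coprime_primes Nat.prime_two (P_prime i)).mpr (two_lt_P hi).ne)

lemma rho_two_mul (k : ℕ) (hk : 1 ≤ k) (b : ℕ → ℕ) :
    rho (2 * ∏ i ∈ Finset.range k, P i ^ b i)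
      = rho (2 ^ (b 0 + 1)) * ∏ i ∈ Finset.Ico 1 k, rho (P i ^ b i) := by
  have hsplit : ∏ i ∈ Finset.range k, P i ^ b i
      = 2 ^ b 0 * ∏ i ∈ Finset.Ico 1 k, P i ^ b i := by
    rw [Finset.range_eq_Ico, Finset.prod_eq_prod_Ico_succ_bot hk, Nat.nth_prime_zero_eq_two]
  have hco : Nat.Coprime (2 ^ (b 0 + 1)) (∏ i ∈ Finset.Ico 1 k, P i ^ b i) :=
    Nat.Coprime.prod_right (fun i hi => coprime_two_pow_P (Finset.mem_Ico.mp hi).1 _)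
  have h2 : 2 * ∏ i ∈ Finset.range k, P i ^ b i
      = 2 ^ (b 0 + 1) * ∏ i ∈ Finset.Ico 1 k, P i ^ b i := by
    rw [hsplit, pow_succ]
    ring
  rw [h2, rho_mul (pow_ne_zero _ two_ne_zero)
    (Finset.prod_ne_zero_iff.mpr (fun i _ => pow_ne_zero _ (P_pos i).ne')) hco,
    rho_prod]

lemma rho_two_pow (c : ℕ) : rho (2 ^ (c + 2)) = 1 / 2 := by
  have h := numPrim_prime_pow Nat.prime_two (c + 1)
  rw [Nat.totient_prime_pow_succ Nat.prime_two, Nat.totient_prime_pow_succ Nat.prime_two] at h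
  norm_num at h
  rw [show c + 1 + 1 = c + 2 from rfl] at h
  have hps : 2 ^ (c + 1) = 2 ^ c * 2 := pow_succ 2 c
  have hval : numPrim (2 ^ (c + 2)) = 2 ^ c := by omega
  rw [rho, hval, Nat.totient_prime_pow_succ Nat.prime_two]
  push_cast
  rw [pow_succ]
  have h0 : (2:ℝ) ^ c ≠ 0 := by positivity
  field_simp

-- key numeric bound for odd primes
lemma totient_le (p c : ℕ) (hp : p.Prime) : (p - 1) * Nat.totient (p ^ c) ≤ Nat.totient (p ^ (c + 1)) := by
  cases c with
  | zero => simp [Nat.totient_prime hp]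
  | succ s =>
    rw [Nat.totient_prime_pow_succ hp, Nat.totient_prime_pow_succ hp]
    calc (p - 1) * (p ^ s * (p - 1)) = (p-1) * p ^ s * (p-1) := by ring
    _ ≤ p * p ^ s * (p - 1) := by
        apply Nat.mul_le_mul_right
        exact Nat.mul_le_mul_right _ (Nat.sub_le p 1)
    _ = p ^ (s + 1) * (p - 1) := by ring

lemma rho_odd_prime_pow_ge {p : ℕ} (hp : p.Prime) (hodd : 2 < p) (c : ℕ) :
    ((p:ℝ) - 2) / ((p:ℝ) - 1) ≤ rho (p ^ (c + 1)) := by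
  have hApos : 0 < Nat.totient (p ^ c) := Nat.totient_pos.mpr (pow_pos hp.pos c)
  have hBpos : 0 < Nat.totient (p ^ (c + 1)) := Nat.totient_pos.mpr (pow_pos hp.pos (c + 1))
  have hsum := numPrim_prime_pow hp c
  have hle := totient_le p c hp
  have hA : (0:ℝ) < (Nat.totient (p ^ c) : ℝ) := by exact_mod_cast hApos
  have hB : (0:ℝ) < (Nat.totient (p ^ (c + 1)) : ℝ) := by exact_mod_cast hBpos
  have hp1 : (0:ℝ) < (p:ℝ) - 1 := by
    have : (2:ℝ) < p := by exact_mod_cast hodd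
    linarith
  have hNB : (numPrim (p ^ (c + 1)) : ℝ)
      = (Nat.totient (p ^ (c + 1)) : ℝ) - (Nat.totient (p ^ c) : ℝ) := by
    have : (numPrim (p ^ (c + 1)) : ℝ) + (Nat.totient (p ^ c) : ℝ)
        = (Nat.totient (p ^ (c + 1)) : ℝ) := by exact_mod_cast hsum
    linarith
  have hkey : ((p:ℝ) - 1) * (Nat.totient (p ^ c) : ℝ) ≤ (Nat.totient (p ^ (c + 1)) : ℝ) := by
    have h2 : ((p - 1 : ℕ) : ℝ) * (Nat.totient (p ^ c) : ℝ)
        ≤ (Nat.totient (p ^ (c + 1)) : ℝ) := by exact_mod_cast hle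
    rwa [Nat.cast_sub hp.one_lt.le, Nat.cast_one] at h2
  rw [rho, hNB, div_le_div_iff₀ hp1 hB]
  nlinarith [hkey, hA, hB, hp1]

lemma rho_odd_prime {p : ℕ} (hp : p.Prime) (hodd : 2 < p) :
    rho p = ((p:ℝ) - 2) / ((p:ℝ) - 1) := by
  have h := numPrim_prime_pow hp 0
  norm_num [Nat.totient_prime hp] at h
  have hval : numPrim p = p - 2 := by omega
  rw [rho, hval, Nat.totient_prime hp, Nat.cast_sub (by omega), Nat.cast_sub hp.one_lt.le]
  norm_num

lemma rho_nonneg_frac {p : ℕ} (hodd : 2 < p) : (0:ℝ) ≤ ((p:ℝ) - 2) / ((p:ℝ) - 1) := by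
  have : (2:ℝ) < p := by exact_mod_cast hodd
  apply div_nonneg <;> linarith


theorem rho_primorial_le (k : ℕ) (hk : 1 < k) (a : ℕ → ℕ) (ha : ∀ i < k, 1 ≤ a i) :
    rho (2 * nthPrimorial k) ≤
      rho (2 * ∏ i ∈ Finset.range k, (Nat.nth Nat.Prime i) ^ (a i)) := by
  have hk1 : 1 ≤ k := hk.le
  have hprim : nthPrimorial k = ∏ i ∈ Finset.range k, P i ^ (fun _ => 1 : ℕ → ℕ) i := by
    simp [nthPrimorial]
  rw [hprim, rho_two_mul k hk1 (fun _ => 1), rho_two_mul k hk1 a]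
  have h20 : rho (2 ^ (1 + 1)) = 1/2 := rho_two_pow 0
  have h2a : rho (2 ^ (a 0 + 1)) = 1/2 := by
    obtain ⟨c, hc⟩ := Nat.exists_eq_add_of_le (ha 0 (by omega))
    rw [show a 0 + 1 = c + 2 by omega]
    exact rho_two_pow c
  rw [h20, h2a]
  apply mul_le_mul_of_nonneg_left _ (by norm_num)
  apply Finset.prod_le_prod
  · intro i hi
    rw [pow_one, rho_odd_prime (P_prime i) (two_lt_P (Finset.mem_Ico.mp hi).1)]
    exact rho_nonneg_frac (two_lt_P (Finset.mem_Ico.mp hi).1)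
  · intro i hi
    obtain ⟨h1i, hik⟩ := Finset.mem_Ico.mp hi
    rw [pow_one, rho_odd_prime (P_prime i) (two_lt_P h1i)]
    obtain ⟨c, hc⟩ := Nat.exists_eq_add_of_le (ha i hik)
    rw [show a i = c + 1 by omega]
    exact rho_odd_prime_pow_ge (P_prime i) (two_lt_P h1i) c

end Aux
end
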